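/- arXiv:1803.08950 — 7 statements merged into one kernel-verified Lean document; each statement's English description precedes it below -/
import Mathlib

section
/- Let x*_K denote the unique minimizer of the reweighted objective F_K := ∑_{i=1}^n p̄_i f_i. Then ‖x*_K − x*‖² ≤ (1/μ) ∑_{i=1}^n ( f_i(x*_K) − f_i(x*) ) · ( 1/n − p̄_i ). -/
open Finset
open scoped RealInnerProductSpace

section Aux

variable {E : Type*} [NormedAddCommGroup E] [InnerProductSpace ℝ E]

lemma aux_convexOn_sum {ι : Type*} (s : Finset ι) (g : ι → E → ℝ)
    (h : ∀ i ∈ s, ConvexOn ℝ Set.univ (g i)) :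
    ConvexOn ℝ Set.univ (fun x => ∑ i ∈ s, g i x) := by
  induction s using Finset.cons_induction with
  | empty => simpa using convexOn_const (0:ℝ) convex_univ
  | cons i s hi ih =>
    simp only [Finset.sum_cons]
    exact (h i (Finset.mem_cons_self i s)).add
      (ih fun j hj => h j (Finset.mem_cons_of_mem hj))

/-- Norm identity for convex combinations. -/
lemma aux_norm_combo (x y : E) (t : ℝ) :
    ‖(1 - t) • x + t • y‖ ^ 2
      = (1 - t) * ‖x‖ ^ 2 + t * ‖y‖ ^ 2 - t * (1 - t) * ‖y - x‖ ^ 2 := by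
  have h1 : (1 - t) • x + t • y = x + t • (y - x) := by
    module
  have h2 : y = x + (y - x) := by abel
  have e1 : ‖x + t • (y - x)‖ ^ 2
      = ‖x‖ ^ 2 + 2 * ⟪x, t • (y - x)⟫ + ‖t • (y - x)‖ ^ 2 := by
    rw [norm_add_sq_real]
  have e2 : ‖y‖ ^ 2 = ‖x‖ ^ 2 + 2 * ⟪x, y - x⟫ + ‖y - x‖ ^ 2 := by
    conv_lhs => rw [h2]
    rw [norm_add_sq_real]
  rw [h1, e1, real_inner_smul_right, norm_smul, Real.norm_eq_abs, mul_pow, sq_abs]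
  linear_combination (-t) * e2

/-- Quadratic growth at a global minimizer of a `c`-strongly convex function. -/
lemma aux_quad_growth {c : ℝ} (hc : 0 < c) {g : E → ℝ}
    (hg : ConvexOn ℝ Set.univ (fun x => g x - c / 2 * ‖x‖ ^ 2))
    {x : E} (hx : ∀ z, g x ≤ g z) (y : E) :
    c / 2 * ‖y - x‖ ^ 2 ≤ g y - g x := by
  have key : ∀ t : ℝ, t ∈ Set.Ioo (0:ℝ) 1 →
      c / 2 * (1 - t) * ‖y - x‖ ^ 2 ≤ g y - g x := by
    intro t ht
    obtain ⟨ht0, ht1⟩ := ht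
    have hcomb := hg.2 (Set.mem_univ x) (Set.mem_univ y)
      (by linarith : (0:ℝ) ≤ 1 - t) (le_of_lt ht0) (by ring)
    have hmin := hx ((1 - t) • x + t • y)
    have hid := aux_norm_combo x y t
    have h := hcomb
    simp only at h
    -- h : g ((1-t)•x + t•y) - c/2 * ‖(1-t)•x + t•y‖^2 ≤ (1-t)*(g x - c/2*‖x‖^2) + t*(g y - c/2*‖y‖^2)
    rw [smul_eq_mul, smul_eq_mul] at h
    nlinarith [h, hmin, hid, mul_pos ht0 (by linarith : (0:ℝ) < 1 - t)]
  have htend : Filter.Tendsto (fun t : ℝ => c / 2 * (1 - t) * ‖y - x‖ ^ 2)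
      (nhdsWithin 0 (Set.Ioi 0)) (nhds (c / 2 * ‖y - x‖ ^ 2)) := by
    have hcont : Continuous (fun t : ℝ => c / 2 * (1 - t) * ‖y - x‖ ^ 2) := by
      continuity
    have := (hcont.tendsto 0).mono_left (nhdsWithin_le_nhds (s := Set.Ioi (0:ℝ)))
    simpa using this
  refine le_of_tendsto htend ?_
  filter_upwards [Ioo_mem_nhdsGT_of_mem (by norm_num : (0:ℝ) ∈ Set.Ico (0:ℝ) 1)]
    with t ht using key t ht

end Aux

/-- Key inequality in the proof of Theorem 3:
`‖xK − xstar‖² ≤ (1/μ) ∑ i (f i xK − f i xstar)(1/n − p i)`. -/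
theorem stmt_1
    {n d : ℕ} (hn : 1 ≤ n) (hd : 1 ≤ d)
    {μ M : ℝ} (hμ : 0 < μ) (hμM : μ ≤ M)
    (f : Fin n → EuclideanSpace ℝ (Fin d) → ℝ)
    (hdiff : ∀ i, Differentiable ℝ (f i))
    (hsc : ∀ i, ConvexOn ℝ Set.univ (fun x => f i x - μ / 2 * ‖x‖ ^ 2))
    (hlip : ∀ i x y, ‖gradient (f i) x - gradient (f i) y‖ ≤ M * ‖x - y‖)
    (xi : Fin n → EuclideanSpace ℝ (Fin d))
    (hxi : ∀ i y, f i (xi i) ≤ f i y)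
    (xstar : EuclideanSpace ℝ (Fin d))
    (hxstar : ∀ y, ∑ i, f i xstar ≤ ∑ i, f i y)
    (p : Fin n → ℝ) (hp : ∀ i, p i ∈ Set.Ioo (0:ℝ) 1) (hpsum : ∑ i, p i = 1)
    (xK : EuclideanSpace ℝ (Fin d))
    (hxK : ∀ y, ∑ i, p i * f i xK ≤ ∑ i, p i * f i y) :
    ‖xK - xstar‖ ^ 2 ≤
      (1 / μ) * ∑ i, (f i xK - f i xstar) * (1 / (n : ℝ) - p i) := by
  have hnpos : (0:ℝ) < n := by exact_mod_cast hn
  -- F is (n*μ)-strongly convex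
  have hF : ConvexOn ℝ Set.univ
      (fun x : EuclideanSpace ℝ (Fin d) => (∑ i, f i x) - (n * μ) / 2 * ‖x‖ ^ 2) := by
    have := aux_convexOn_sum (Finset.univ : Finset (Fin n))
      (fun i x => f i x - μ / 2 * ‖x‖ ^ 2) (fun i _ => hsc i)
    convert this using 2 with x
    · rfl
    rw [Finset.sum_sub_distrib, Finset.sum_const, Finset.card_univ, Fintype.card_fin,
      nsmul_eq_mul]
    ring
  -- F_K is μ-strongly convex
  have hFK : ConvexOn ℝ Set.univ
      (fun x : EuclideanSpace ℝ (Fin d) => (∑ i, p i * f i x) - μ / 2 * ‖x‖ ^ 2) := by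
    have := aux_convexOn_sum (Finset.univ : Finset (Fin n))
      (fun i x => p i * (f i x - μ / 2 * ‖x‖ ^ 2))
      (fun i _ => (hsc i).smul (le_of_lt (hp i).1))
    convert this using 2 with x
    · rfl
    simp only [mul_sub, Finset.sum_sub_distrib, ← Finset.sum_mul, hpsum, one_mul]
  have h1 := aux_quad_growth (by positivity : (0:ℝ) < n * μ) hF hxstar xK
  have h2 := aux_quad_growth hμ hFK hxK xstar
  rw [show xstar - xK = -(xK - xstar) by abel, norm_neg] at h2
  -- combine
  have hsum : μ * ‖xK - xstar‖ ^ 2 ≤ ∑ i, (f i xK - f i xstar) * (1 / (n : ℝ) - p i) := by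
    have e : ∑ i, (f i xK - f i xstar) * (1 / (n : ℝ) - p i)
        = (1 / (n : ℝ)) * ((∑ i, f i xK) - ∑ i, f i xstar)
          + ((∑ i, p i * f i xstar) - ∑ i, p i * f i xK) := by
      have hi : ∀ i, (f i xK - f i xstar) * (1 / (n:ℝ) - p i)
          = ((1/(n:ℝ)) * f i xK - (1/(n:ℝ)) * f i xstar)
            + (p i * f i xstar - p i * f i xK) := fun i => by ring
      simp only [hi, Finset.sum_add_distrib, Finset.sum_sub_distrib, ← Finset.mul_sum]
      ring
    rw [e]
    have h1' : μ / 2 * ‖xK - xstar‖ ^ 2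
        ≤ (1 / (n : ℝ)) * ((∑ i, f i xK) - ∑ i, f i xstar) := by
      have hq : μ / 2 * ‖xK - xstar‖ ^ 2
          = (1 / (n : ℝ)) * ((n : ℝ) * μ / 2 * ‖xK - xstar‖ ^ 2) := by
        field_simp
      rw [hq]
      exact mul_le_mul_of_nonneg_left h1 (by positivity)
    linarith
  rw [one_div, inv_mul_eq_div, le_div_iff₀ hμ]
  linarith [hsum]
end

section
/- Suppose the gradient bound and the consensus bound hold. Then for all i ∈ {1,…,n} and all k ≥ 0 with k ≤ K−1, ⟨∇f_i(z_i[k]), x̄[k] − x*_K⟩ ≥ μ‖x̄[k] − x*_K‖² − γ_i[k] − χ_i[k] + ⟨∇f_i(x*_K), x̄[k] − x*_K⟩. -/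
open Finset
open scoped RealInnerProductSpace


section Aux

variable {E : Type*} [NormedAddCommGroup E] [InnerProductSpace ℝ E] [CompleteSpace E]

/-- Subgradient inequality for a differentiable convex function. -/
lemma aux_subgrad {g : E → ℝ} (hg : Differentiable ℝ g)
    (hc : ConvexOn ℝ Set.univ g) (x y : E) :
    g x + ⟪gradient g x, y - x⟫ ≤ g y := by
  set c : ℝ → E := fun t => x + t • (y - x) with hc_def
  have hline : ∀ t : ℝ, HasDerivAt c (y - x) t := by
    intro t
    have := ((hasDerivAt_id t).smul_const (y - x)).const_add x
    rw [one_smul] at this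
    exact this
  have hφ : ∀ t : ℝ, HasDerivAt (fun t => g (c t)) ⟪gradient g (c t), y - x⟫ t := by
    intro t
    have h1 := ((hg (c t)).hasGradientAt.hasFDerivAt).comp_hasDerivAt t (hline t)
    exact h1
  have hconv : ConvexOn ℝ Set.univ (fun t => g (c t)) := by
    have h0 := hc.comp_affineMap (AffineMap.lineMap x y : ℝ →ᵃ[ℝ] E)
    simp only [Set.preimage_univ] at h0
    have heqf : (fun t : ℝ => g (c t)) = g ∘ (AffineMap.lineMap x y) := by
      funext t
      simp only [hc_def, Function.comp_apply, AffineMap.lineMap_apply, vsub_eq_sub,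
        vadd_eq_add]
      congr 1
      abel
    rw [heqf]
    exact h0
  have hd : deriv (fun t => g (c t)) 0 ≤ slope (fun t => g (c t)) 0 1 :=
    hconv.deriv_le_slope (Set.mem_univ 0) (Set.mem_univ 1) zero_lt_one
      ((hφ 0).differentiableAt)
  rw [(hφ 0).deriv] at hd
  have hc0 : c 0 = x := by simp [hc_def]
  have hc1 : c 1 = y := by simp [hc_def]
  rw [slope_def_field] at hd
  rw [hc0] at hd
  simp [hc0, hc1] at hd
  have hgi : ⟪gradient g x, y - x⟫ = (fderiv ℝ g x) y - (fderiv ℝ g x) x := by simp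
  linarith

lemma aux_normsq_grad (x : E) :
    HasGradientAt (fun t : E => ‖t‖ ^ 2) ((2 : ℝ) • x) x := by
  have h := (hasFDerivAt_id x).inner ℝ (hasFDerivAt_id x)
  have heq : ((fderivInnerCLM ℝ ((id x : E), (id x : E))).comp
      ((ContinuousLinearMap.id ℝ E).prod (ContinuousLinearMap.id ℝ E)))
      = InnerProductSpace.toDual ℝ E ((2 : ℝ) • x) := by
    ext w
    simp [fderivInnerCLM_apply, real_inner_smul_left, real_inner_comm]
    ring
  rw [heq] at h
  have h2 : HasFDerivAt (fun t : E => ‖t‖ ^ 2)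
      (InnerProductSpace.toDual ℝ E ((2 : ℝ) • x)) x := by
    simpa only [id_eq, real_inner_self_eq_norm_sq] using h
  simpa using h2.hasGradientAt

lemma aux_pert_grad {μ : ℝ} {g : E → ℝ} (hg : Differentiable ℝ g) (x : E) :
    HasGradientAt (fun t => g t - μ / 2 * ‖t‖ ^ 2) (gradient g x - μ • x) x := by
  have h1 := (hg x).hasGradientAt.hasFDerivAt
  have h2 := ((aux_normsq_grad x).hasFDerivAt).const_mul (μ / 2)
  have h3 := h1.sub h2
  have heq : (InnerProductSpace.toDual ℝ E (gradient g x))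
      - (μ / 2) • (InnerProductSpace.toDual ℝ E ((2:ℝ) • x))
      = InnerProductSpace.toDual ℝ E (gradient g x - μ • x) := by
    rw [← map_smul, ← map_sub]
    congr 1
    rw [smul_smul]
    norm_num
  rw [heq] at h3
  have h4 := h3.hasGradientAt
  rw [LinearIsometryEquiv.symm_apply_apply] at h4
  exact h4

/-- Strong monotonicity of the gradient of a `μ`-strongly convex function. -/
lemma aux_smono {μ : ℝ} {g : E → ℝ} (hg : Differentiable ℝ g)
    (hc : ConvexOn ℝ Set.univ (fun x => g x - μ / 2 * ‖x‖ ^ 2)) (x y : E) :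
    μ * ‖x - y‖ ^ 2 ≤ ⟪gradient g x - gradient g y, x - y⟫ := by
  set h : E → ℝ := fun t => g t - μ / 2 * ‖t‖ ^ 2 with hh
  have hdiffh : Differentiable ℝ h := by
    apply hg.sub
    exact (contDiff_norm_sq (𝕜 := ℝ) (E := E) (n := 1)).differentiable one_ne_zero |>.const_mul _
  have hgx : gradient h x = gradient g x - μ • x := (aux_pert_grad hg x).gradient
  have hgy : gradient h y = gradient g y - μ • y := (aux_pert_grad hg y).gradient
  have h1 := aux_subgrad hdiffh hc x y
  have h2 := aux_subgrad hdiffh hc y x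
  rw [hgx] at h1
  rw [hgy] at h2
  have key : (0:ℝ) ≤ ⟪gradient g x - μ • x - (gradient g y - μ • y), x - y⟫ := by
    have hsum : ⟪gradient h x, y - x⟫ + ⟪gradient h y, x - y⟫ ≤ 0 := by
      rw [hgx, hgy]; linarith
    rw [hgx, hgy] at hsum
    have : ⟪gradient g x - μ • x, y - x⟫ = - ⟪gradient g x - μ • x, x - y⟫ := by
      rw [← inner_neg_right]; congr 1; abel
    rw [this] at hsum
    rw [inner_sub_left]
    linarith
  have hexp : ⟪gradient g x - μ • x - (gradient g y - μ • y), x - y⟫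
      = ⟪gradient g x - gradient g y, x - y⟫ - μ * ‖x - y‖ ^ 2 := by
    have : gradient g x - μ • x - (gradient g y - μ • y)
        = (gradient g x - gradient g y) - μ • (x - y) := by
      rw [smul_sub]; abel
    rw [this, inner_sub_left, real_inner_smul_left, real_inner_self_eq_norm_sq]
  rw [hexp] at key
  linarith

end Aux

/-- Lemma 2: under the gradient bound and the consensus bound, for all `i` and `k ≤ K − 1`,
`⟨∇f_i(z_i[k]), x̄[k] − x*_K⟩ ≥ μ‖x̄[k] − x*_K‖² − γ_i[k] − χ_i[k] + ⟨∇f_i(x*_K), x̄[k] − x*_K⟩`,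
where `γ_i[k] = κ L C a_i q^k` and `χ_i[k] = κ L² C ∑_{s=0}^k q^{k−s} α_i[s] δ_i[s]`, `κ = M/μ`. -/
theorem stmt_4
    {n d : ℕ} (hn : 1 ≤ n) (hd : 1 ≤ d)
    {μ M : ℝ} (hμ : 0 < μ) (hμM : μ ≤ M)
    (f : Fin n → EuclideanSpace ℝ (Fin d) → ℝ)
    (hdiff : ∀ i, Differentiable ℝ (f i))
    (hsc : ∀ i, ConvexOn ℝ Set.univ (fun x => f i x - μ / 2 * ‖x‖ ^ 2))
    (hlip : ∀ i x y, ‖gradient (f i) x - gradient (f i) y‖ ≤ M * ‖x - y‖)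
    (δ : Fin n → ℕ → ℕ) (hδ : ∀ i k, δ i k = 0 ∨ δ i k = 1) (hδ0 : ∀ i, δ i 0 = 1)
    (α : Fin n → ℕ → ℝ) (hα : ∀ i k, 0 ≤ α i k)
    (z : Fin n → ℕ → EuclideanSpace ℝ (Fin d))
    (xbar : ℕ → EuclideanSpace ℝ (Fin d))
    (hrec : ∀ k, xbar (k + 1) =
      xbar k - ((n : ℝ))⁻¹ • ∑ i, (α i k * (δ i k : ℝ)) • gradient (f i) (z i k))
    (K : ℕ) (hK : 1 ≤ K)
    (hppos : ∀ i, 0 < ∑ k ∈ Finset.range K, α i k * (δ i k : ℝ))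
    (xK : EuclideanSpace ℝ (Fin d))
    (hxK : ∀ y,
      ∑ i, ((∑ k ∈ Finset.range K, α i k * (δ i k : ℝ)) /
          (∑ j, ∑ k ∈ Finset.range K, α j k * (δ j k : ℝ))) * f i xK ≤
      ∑ i, ((∑ k ∈ Finset.range K, α i k * (δ i k : ℝ)) /
          (∑ j, ∑ k ∈ Finset.range K, α j k * (δ j k : ℝ))) * f i y)
    (L : ℝ) (hL : 0 < L)
    (hgradz : ∀ i k, ‖gradient (f i) (z i k)‖ ≤ L)
    (hgradx : ∀ i k, ‖gradient (f i) (xbar k)‖ ≤ L)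
    (C q : ℝ) (hC : 0 < C) (hq : q ∈ Set.Ioo (0:ℝ) 1)
    (a : Fin n → ℝ) (ha : ∀ i, 0 ≤ a i)
    (hcons : ∀ i k, ‖z i k - xbar k‖ ≤
      C * q ^ k * a i + C * L * ∑ s ∈ Finset.range (k + 1), q ^ (k - s) * (α i s * (δ i s : ℝ)))
    (i : Fin n) (k : ℕ) (hk : k ≤ K - 1) :
    ⟪gradient (f i) (z i k), xbar k - xK⟫ ≥
      μ * ‖xbar k - xK‖ ^ 2
        - (M / μ) * L * C * a i * q ^ k
        - (M / μ) * L ^ 2 * C *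
            ∑ s ∈ Finset.range (k + 1), q ^ (k - s) * (α i s * (δ i s : ℝ))
        + ⟪gradient (f i) xK, xbar k - xK⟫ := by
  classical
  have hnE : Nonempty (Fin n) := Fin.pos_iff_nonempty.mp hn

  set w : Fin n → ℝ := fun i => (∑ k ∈ Finset.range K, α i k * (δ i k : ℝ)) /
      (∑ j, ∑ k ∈ Finset.range K, α j k * (δ j k : ℝ)) with hw_def
  have hP : 0 < ∑ j, ∑ k ∈ Finset.range K, α j k * (δ j k : ℝ) :=
    Finset.sum_pos (fun j _ => hppos j) Finset.univ_nonempty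
  have hw0 : ∀ j, 0 ≤ w j := fun j => div_nonneg (hppos j).le hP.le
  have hw1 : ∑ j, w j = 1 := by
    rw [hw_def, ← Finset.sum_div, div_self hP.ne']
  set F : EuclideanSpace ℝ (Fin d) → ℝ := fun x => ∑ j, w j * f j x with hF_def
  have hFgrad : ∀ x : EuclideanSpace ℝ (Fin d), HasGradientAt F (∑ j, w j • gradient (f j) x) x := by
    intro x
    have h1 : HasFDerivAt F
        (∑ j, w j • (InnerProductSpace.toDual ℝ (EuclideanSpace ℝ (Fin d)) (gradient (f j) x))) x :=
      HasFDerivAt.fun_sum fun j _ =>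
        ((hdiff j x).hasGradientAt.hasFDerivAt).const_mul (w j)
    have h2 : (∑ j, w j • (InnerProductSpace.toDual ℝ (EuclideanSpace ℝ (Fin d)) (gradient (f j) x)))
        = InnerProductSpace.toDual ℝ (EuclideanSpace ℝ (Fin d)) (∑ j, w j • gradient (f j) x) := by
      rw [map_sum]
      simp [map_smul]
    rw [h2] at h1
    have h3 := h1.hasGradientAt
    rw [LinearIsometryEquiv.symm_apply_apply] at h3
    exact h3
  -- gradient of F vanishes at xK
  have hmin : IsLocalMin F xK := by
    have h1 : IsMinOn F Set.univ xK := by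
      intro y _
      exact hxK y
    exact h1.isLocalMin Filter.univ_mem
  have hG0 : ∑ j, w j • gradient (f j) xK = 0 := by
    have h0 := hmin.hasFDerivAt_eq_zero (hFgrad xK).hasFDerivAt
    have := congrArg (InnerProductSpace.toDual ℝ (EuclideanSpace ℝ (Fin d))).symm h0
    rw [LinearIsometryEquiv.symm_apply_apply, map_zero] at this
    exact this
  set v : EuclideanSpace ℝ (Fin d) := xbar k - xK with hv_def
  have smono : ∀ (j : Fin n) (x y : EuclideanSpace ℝ (Fin d)),
      μ * ‖x - y‖ ^ 2 ≤ ⟪gradient (f j) x - gradient (f j) y, x - y⟫ :=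
    fun j x y => aux_smono (hdiff j) (hsc j) x y
  -- bound on ‖v‖
  have hub : ‖v‖ ≤ L / μ := by
    have h1 : μ * ‖v‖ ^ 2 ≤
        ⟪∑ j, w j • (gradient (f j) (xbar k) - gradient (f j) xK), v⟫ := by
      rw [sum_inner]
      have h2 : ∀ j ∈ Finset.univ, w j * (μ * ‖v‖ ^ 2) ≤
          ⟪w j • (gradient (f j) (xbar k) - gradient (f j) xK), v⟫ := by
        intro j _
        rw [real_inner_smul_left]
        exact mul_le_mul_of_nonneg_left (smono j (xbar k) xK) (hw0 j)
      calc μ * ‖v‖ ^ 2 = ∑ j, w j * (μ * ‖v‖ ^ 2) := by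
            rw [← Finset.sum_mul, hw1, one_mul]
        _ ≤ _ := Finset.sum_le_sum h2
    have h3 : ∑ j, w j • (gradient (f j) (xbar k) - gradient (f j) xK)
        = ∑ j, w j • gradient (f j) (xbar k) := by
      simp only [smul_sub, Finset.sum_sub_distrib, hG0, sub_zero]
    rw [h3] at h1
    have h4 : ⟪∑ j, w j • gradient (f j) (xbar k), v⟫ ≤ L * ‖v‖ := by
      calc ⟪∑ j, w j • gradient (f j) (xbar k), v⟫
          ≤ ‖∑ j, w j • gradient (f j) (xbar k)‖ * ‖v‖ := real_inner_le_norm _ _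
        _ ≤ L * ‖v‖ := by
            apply mul_le_mul_of_nonneg_right _ (norm_nonneg v)
            calc ‖∑ j, w j • gradient (f j) (xbar k)‖
                ≤ ∑ j, ‖w j • gradient (f j) (xbar k)‖ := norm_sum_le _ _
              _ ≤ ∑ j, w j * L := by
                  apply Finset.sum_le_sum
                  intro j _
                  rw [norm_smul, Real.norm_eq_abs, abs_of_nonneg (hw0 j)]
                  exact mul_le_mul_of_nonneg_left (hgradx j k) (hw0 j)
              _ = L := by rw [← Finset.sum_mul, hw1, one_mul]
    have h5 : μ * ‖v‖ ^ 2 ≤ L * ‖v‖ := h1.trans h4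
    rcases eq_or_lt_of_le (norm_nonneg v) with h6 | h6
    · rw [← h6]
      positivity
    · rw [le_div_iff₀ hμ]
      nlinarith
  -- strong convexity step
  have hA : μ * ‖v‖ ^ 2 + ⟪gradient (f i) xK, v⟫ ≤ ⟪gradient (f i) (xbar k), v⟫ := by
    have := smono i (xbar k) xK
    rw [inner_sub_left] at this
    linarith
  -- perturbation step
  set B : ℝ := C * q ^ k * a i +
      C * L * ∑ s ∈ Finset.range (k + 1), q ^ (k - s) * (α i s * (δ i s : ℝ)) with hB_def
  have hSnn : 0 ≤ ∑ s ∈ Finset.range (k + 1), q ^ (k - s) * (α i s * (δ i s : ℝ)) :=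
    Finset.sum_nonneg fun s _ => mul_nonneg (pow_nonneg hq.1.le _)
      (mul_nonneg (hα i s) (Nat.cast_nonneg _))
  have hBnn : 0 ≤ B := by
    apply add_nonneg
    · exact mul_nonneg (mul_nonneg hC.le (pow_nonneg hq.1.le _)) (ha i)
    · exact mul_nonneg (mul_nonneg hC.le hL.le) hSnn
  have hB2 : ⟪gradient (f i) (xbar k), v⟫ - M * B * (L / μ) ≤
      ⟪gradient (f i) (z i k), v⟫ := by
    have h1 : ⟪gradient (f i) (z i k), v⟫ - ⟪gradient (f i) (xbar k), v⟫
        = ⟪gradient (f i) (z i k) - gradient (f i) (xbar k), v⟫ := by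
      rw [inner_sub_left]
    have h2 : |⟪gradient (f i) (z i k) - gradient (f i) (xbar k), v⟫|
        ≤ ‖gradient (f i) (z i k) - gradient (f i) (xbar k)‖ * ‖v‖ :=
      abs_real_inner_le_norm _ _
    have h3 : ‖gradient (f i) (z i k) - gradient (f i) (xbar k)‖ * ‖v‖ ≤ M * B * (L / μ) := by
      have hM0 : (0:ℝ) ≤ M := hμ.le.trans hμM
      have hMz : ‖gradient (f i) (z i k) - gradient (f i) (xbar k)‖ ≤ M * B :=
        (hlip i (z i k) (xbar k)).trans (mul_le_mul_of_nonneg_left (hcons i k) hM0)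
      exact mul_le_mul hMz hub (norm_nonneg v) (mul_nonneg hM0 hBnn)
    have h4 : -(M * B * (L / μ)) ≤
        ⟪gradient (f i) (z i k) - gradient (f i) (xbar k), v⟫ := by
      have := (abs_le.mp (h2.trans h3)).1
      linarith
    linarith [h1 ▸ h4]
  have hBid : M * B * (L / μ) = (M / μ) * L * C * a i * q ^ k +
      (M / μ) * L ^ 2 * C * ∑ s ∈ Finset.range (k + 1), q ^ (k - s) * (α i s * (δ i s : ℝ)) := by
    rw [hB_def]
    field_simp
  rw [ge_iff_le]
  linarith
end

section
/- Let θ ∈ (0,1), B > 0 and w_1,…,w_n ≥ 1. There exist constants A_1, A_2, A_3 > 0, depending only on n, κ, L, C, q, B, θ, w_1,…,w_n and a_1,…,a_n, such that for every integer K ≥ 1 and every choice of activation indicators δ_i : ℕ → {0,1}, if the step-sizes are constant, α_i[k] = w_i B / K^θ for all k, then b_1[K] ≤ A_1 / K^{2θ−1}, b_2[K] ≤ A_2 / K^θ, and b_3[K] ≤ A_3 / K^{2θ−1}. -/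
open Finset

/-- Lemma 4: for constant step-sizes `α_i[k] = w_i B / K^θ`, there exist constants
`A₁, A₂, A₃ > 0` (independent of `K` and of the activation indicators) such that
`b₁[K] ≤ A₁/K^{2θ−1}`, `b₂[K] ≤ A₂/K^θ`, and `b₃[K] ≤ A₃/K^{2θ−1}`. -/
theorem stmt_6
    {n : ℕ} (hn : 1 ≤ n)
    {κ L C q : ℝ} (hκ : 0 < κ) (hL : 0 < L) (hC : 0 < C) (hq : q ∈ Set.Ioo (0:ℝ) 1)
    (a : Fin n → ℝ) (ha : ∀ i, 0 ≤ a i)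
    {θ B : ℝ} (hθ : θ ∈ Set.Ioo (0:ℝ) 1) (hB : 0 < B)
    (w : Fin n → ℝ) (hw : ∀ i, 1 ≤ w i) :
    ∃ A₁ A₂ A₃ : ℝ, 0 < A₁ ∧ 0 < A₂ ∧ 0 < A₃ ∧
      ∀ K : ℕ, 1 ≤ K →
      ∀ δ : Fin n → ℕ → ℕ, (∀ i k, δ i k = 0 ∨ δ i k = 1) →
      ∀ α : Fin n → ℕ → ℝ, (∀ i k, α i k = w i * B / (K : ℝ) ^ θ) →
        (L * ∑ k ∈ Finset.range K,
            ((1 / (n : ℝ)) * ∑ i, α i k * (δ i k : ℝ)) ^ 2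
          ≤ A₁ / (K : ℝ) ^ (2 * θ - 1)) ∧
        (2 * L * ∑ k ∈ Finset.range K,
            (1 / (n : ℝ)) * ∑ i, α i k * (δ i k : ℝ) * (κ * L * C * a i * q ^ k)
          ≤ A₂ / (K : ℝ) ^ θ) ∧
        (2 * L * ∑ k ∈ Finset.range K,
            (1 / (n : ℝ)) * ∑ i, α i k * (δ i k : ℝ) *
              (κ * L ^ 2 * C *
                ∑ s ∈ Finset.range (k + 1), q ^ (k - s) * (α i s * (δ i s : ℝ)))
          ≤ A₃ / (K : ℝ) ^ (2 * θ - 1)) := by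
  obtain ⟨hq0, hq1⟩ := hq
  obtain ⟨hθ0, hθ1⟩ := hθ
  have h1q : (0:ℝ) < 1 - q := by linarith
  have hnpos : (0:ℝ) < (n : ℝ) := by exact_mod_cast hn
  set S1 : ℝ := ∑ i, w i with hS1
  set S2 : ℝ := ∑ i, w i * a i with hS2
  set S3 : ℝ := ∑ i, w i * w i with hS3
  have hS1pos : 0 < S1 := by
    have : (n:ℝ) ≤ S1 := by
      calc (n:ℝ) = ∑ _i : Fin n, (1:ℝ) := by simp
        _ ≤ S1 := Finset.sum_le_sum fun i _ => hw i
    linarith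
  have hS2nn : 0 ≤ S2 :=
    Finset.sum_nonneg fun i _ => mul_nonneg (by linarith [hw i]) (ha i)
  have hS3pos : 0 < S3 := by
    have : (n:ℝ) ≤ S3 := by
      calc (n:ℝ) = ∑ _i : Fin n, (1:ℝ) := by simp
        _ ≤ S3 := Finset.sum_le_sum fun i _ => by nlinarith [hw i]
    linarith
  refine ⟨L * (S1 * B / n) ^ 2, 2 * L * κ * L * C * B * (S2 / n + 1) / (1 - q),
    2 * L * (κ * L ^ 2 * C) * B ^ 2 * (S3 / n) / (1 - q), by positivity, by positivity,
    by positivity, ?_⟩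
  intro K hK δ hδ α hα
  have hKpos : (0:ℝ) < (K:ℝ) := by exact_mod_cast hK
  have hKθ : (0:ℝ) < (K:ℝ) ^ θ := Real.rpow_pos_of_pos hKpos θ
  have hR : (0:ℝ) < (K:ℝ) ^ (2 * θ - 1) := Real.rpow_pos_of_pos hKpos _
  have hmul : (K:ℝ) ^ θ * (K:ℝ) ^ θ = (K:ℝ) ^ (2 * θ - 1) * (K:ℝ) := by
    calc (K:ℝ) ^ θ * (K:ℝ) ^ θ = (K:ℝ) ^ (θ + θ) := (Real.rpow_add hKpos θ θ).symm
      _ = (K:ℝ) ^ ((2 * θ - 1) + 1) := by ring_nf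
      _ = (K:ℝ) ^ (2 * θ - 1) * (K:ℝ) ^ (1:ℝ) := Real.rpow_add hKpos _ _
      _ = (K:ℝ) ^ (2 * θ - 1) * (K:ℝ) := by rw [Real.rpow_one]
  have hδle : ∀ i k, ((δ i k : ℝ)) ≤ 1 := by
    intro i k; rcases hδ i k with h | h <;> simp [h]
  have hδnn : ∀ i k, (0:ℝ) ≤ (δ i k : ℝ) := fun i k => Nat.cast_nonneg _
  have hαδ : ∀ i k, α i k * (δ i k : ℝ) ≤ w i * B / (K:ℝ) ^ θ := by
    intro i k
    rw [hα]
    calc w i * B / (K:ℝ) ^ θ * (δ i k : ℝ) ≤ w i * B / (K:ℝ) ^ θ * 1 := by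
          apply mul_le_mul_of_nonneg_left (hδle i k)
          have := hw i
          positivity
      _ = w i * B / (K:ℝ) ^ θ := mul_one _
  have hαδnn : ∀ i k, (0:ℝ) ≤ α i k * (δ i k : ℝ) := by
    intro i k
    rw [hα]
    have := hw i
    positivity
  have hgeom : ∀ m : ℕ, ∑ j ∈ Finset.range m, q ^ j ≤ 1 / (1 - q) := by
    intro m
    rw [geom_sum_eq hq1.ne m]
    have heq : (q ^ m - 1) / (q - 1) = (1 - q ^ m) / (1 - q) := by
      rw [div_eq_div_iff (by linarith) (by linarith)]; ring
    rw [heq, div_le_div_iff₀ h1q h1q]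
    have : (0:ℝ) ≤ q ^ m := by positivity
    nlinarith
  refine ⟨?_, ?_, ?_⟩
  · -- b1
    have hterm : ∀ k ∈ Finset.range K,
        ((1 / (n : ℝ)) * ∑ i, α i k * (δ i k : ℝ)) ^ 2
          ≤ ((1 / (n:ℝ)) * (S1 * B / (K:ℝ) ^ θ)) ^ 2 := by
      intro k _
      have hnn : (0:ℝ) ≤ (1 / (n : ℝ)) * ∑ i, α i k * (δ i k : ℝ) := by
        apply mul_nonneg (by positivity)
        exact Finset.sum_nonneg fun i _ => hαδnn i k
      have hub : (1 / (n : ℝ)) * ∑ i, α i k * (δ i k : ℝ)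
          ≤ (1 / (n:ℝ)) * (S1 * B / (K:ℝ) ^ θ) := by
        apply mul_le_mul_of_nonneg_left _ (by positivity)
        calc ∑ i, α i k * (δ i k : ℝ) ≤ ∑ i, w i * B / (K:ℝ) ^ θ :=
              Finset.sum_le_sum fun i _ => hαδ i k
          _ = S1 * B / (K:ℝ) ^ θ := by
              rw [hS1, ← Finset.sum_div, ← Finset.sum_mul]
      exact pow_le_pow_left₀ hnn hub 2
    calc L * ∑ k ∈ Finset.range K, ((1 / (n : ℝ)) * ∑ i, α i k * (δ i k : ℝ)) ^ 2
        ≤ L * ((K:ℝ) * ((1 / (n:ℝ)) * (S1 * B / (K:ℝ) ^ θ)) ^ 2) := by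
          apply mul_le_mul_of_nonneg_left _ hL.le
          calc ∑ k ∈ Finset.range K, ((1 / (n : ℝ)) * ∑ i, α i k * (δ i k : ℝ)) ^ 2
              ≤ ∑ _k ∈ Finset.range K, ((1 / (n:ℝ)) * (S1 * B / (K:ℝ) ^ θ)) ^ 2 :=
                Finset.sum_le_sum hterm
            _ = (K:ℝ) * ((1 / (n:ℝ)) * (S1 * B / (K:ℝ) ^ θ)) ^ 2 := by
                rw [Finset.sum_const, Finset.card_range, nsmul_eq_mul]
      _ = L * (S1 * B / n) ^ 2 / (K:ℝ) ^ (2 * θ - 1) := by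
          have h2 : ((1 / (n:ℝ)) * (S1 * B / (K:ℝ) ^ θ)) ^ 2
              = (S1 * B / n) ^ 2 / ((K:ℝ) ^ θ * (K:ℝ) ^ θ) := by
            field_simp
          rw [h2, hmul]
          field_simp
  · -- b2
    have hterm : ∀ k ∈ Finset.range K,
        (1 / (n : ℝ)) * ∑ i, α i k * (δ i k : ℝ) * (κ * L * C * a i * q ^ k)
          ≤ (1 / (n:ℝ)) * (κ * L * C * B * S2 / (K:ℝ) ^ θ) * q ^ k := by
      intro k _
      have : ∑ i, α i k * (δ i k : ℝ) * (κ * L * C * a i * q ^ k)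
          ≤ (κ * L * C * B * S2 / (K:ℝ) ^ θ) * q ^ k := by
        calc ∑ i, α i k * (δ i k : ℝ) * (κ * L * C * a i * q ^ k)
            ≤ ∑ i, (w i * B / (K:ℝ) ^ θ) * (κ * L * C * a i * q ^ k) := by
              apply Finset.sum_le_sum
              intro i _
              apply mul_le_mul_of_nonneg_right (hαδ i k)
              have := ha i
              positivity
          _ = (κ * L * C * B * S2 / (K:ℝ) ^ θ) * q ^ k := by
              rw [hS2, Finset.mul_sum, Finset.sum_div, Finset.sum_mul]
              apply Finset.sum_congr rfl
              intro i _
              field_simp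
      calc (1 / (n : ℝ)) * ∑ i, α i k * (δ i k : ℝ) * (κ * L * C * a i * q ^ k)
          ≤ (1 / (n:ℝ)) * ((κ * L * C * B * S2 / (K:ℝ) ^ θ) * q ^ k) :=
            mul_le_mul_of_nonneg_left this (by positivity)
        _ = (1 / (n:ℝ)) * (κ * L * C * B * S2 / (K:ℝ) ^ θ) * q ^ k := by ring
    calc 2 * L * ∑ k ∈ Finset.range K,
          (1 / (n : ℝ)) * ∑ i, α i k * (δ i k : ℝ) * (κ * L * C * a i * q ^ k)
        ≤ 2 * L * ((1 / (n:ℝ)) * (κ * L * C * B * S2 / (K:ℝ) ^ θ) * (1 / (1 - q))) := by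
          apply mul_le_mul_of_nonneg_left _ (by positivity)
          calc ∑ k ∈ Finset.range K,
                (1 / (n : ℝ)) * ∑ i, α i k * (δ i k : ℝ) * (κ * L * C * a i * q ^ k)
              ≤ ∑ k ∈ Finset.range K,
                (1 / (n:ℝ)) * (κ * L * C * B * S2 / (K:ℝ) ^ θ) * q ^ k :=
                Finset.sum_le_sum hterm
            _ = (1 / (n:ℝ)) * (κ * L * C * B * S2 / (K:ℝ) ^ θ)
                  * ∑ k ∈ Finset.range K, q ^ k := by rw [← Finset.mul_sum]
            _ ≤ (1 / (n:ℝ)) * (κ * L * C * B * S2 / (K:ℝ) ^ θ) * (1 / (1 - q)) := by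
                apply mul_le_mul_of_nonneg_left (hgeom K)
                positivity
      _ = (2 * L * κ * L * C * B * (S2 / n) / (1 - q)) / (K:ℝ) ^ θ := by
          field_simp
      _ ≤ (2 * L * κ * L * C * B * (S2 / n + 1) / (1 - q)) / (K:ℝ) ^ θ := by
          gcongr
          linarith
  · -- b3
    have hinner : ∀ i k, ∑ s ∈ Finset.range (k + 1), q ^ (k - s) * (α i s * (δ i s : ℝ))
        ≤ (w i * B / (K:ℝ) ^ θ) * (1 / (1 - q)) := by
      intro i k
      calc ∑ s ∈ Finset.range (k + 1), q ^ (k - s) * (α i s * (δ i s : ℝ))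
          ≤ ∑ s ∈ Finset.range (k + 1), q ^ (k - s) * (w i * B / (K:ℝ) ^ θ) := by
            apply Finset.sum_le_sum
            intro s _
            exact mul_le_mul_of_nonneg_left (hαδ i s) (by positivity)
        _ = (w i * B / (K:ℝ) ^ θ) * ∑ s ∈ Finset.range (k + 1), q ^ (k - s) := by
            rw [Finset.mul_sum]; apply Finset.sum_congr rfl; intro s _; ring
        _ ≤ (w i * B / (K:ℝ) ^ θ) * (1 / (1 - q)) := by
            apply mul_le_mul_of_nonneg_left _ (by have := hw i; positivity)
            have hrefl : ∑ s ∈ Finset.range (k + 1), q ^ (k - s)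
                = ∑ j ∈ Finset.range (k + 1), q ^ j := by
              rw [← Finset.sum_range_reflect]
              apply Finset.sum_congr rfl
              intro j hj
              simp only [Finset.mem_range] at hj
              congr 1
              omega
            rw [hrefl]
            exact hgeom (k + 1)
    have hterm : ∀ k ∈ Finset.range K,
        (1 / (n : ℝ)) * ∑ i, α i k * (δ i k : ℝ) *
            (κ * L ^ 2 * C * ∑ s ∈ Finset.range (k + 1), q ^ (k - s) * (α i s * (δ i s : ℝ)))
          ≤ (1 / (n:ℝ)) * ((κ * L ^ 2 * C) * B ^ 2 * S3
              / ((K:ℝ) ^ θ * (K:ℝ) ^ θ) * (1 / (1 - q))) := by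
      intro k _
      apply mul_le_mul_of_nonneg_left _ (by positivity)
      calc ∑ i, α i k * (δ i k : ℝ) *
            (κ * L ^ 2 * C * ∑ s ∈ Finset.range (k + 1), q ^ (k - s) * (α i s * (δ i s : ℝ)))
          ≤ ∑ i, (w i * B / (K:ℝ) ^ θ) *
            (κ * L ^ 2 * C * ((w i * B / (K:ℝ) ^ θ) * (1 / (1 - q)))) := by
            apply Finset.sum_le_sum
            intro i _
            have h1 : (0:ℝ) ≤ ∑ s ∈ Finset.range (k + 1), q ^ (k - s) * (α i s * (δ i s : ℝ)) :=
              Finset.sum_nonneg fun s _ => mul_nonneg (by positivity) (hαδnn i s)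
            have h2 : κ * L ^ 2 * C *
                ∑ s ∈ Finset.range (k + 1), q ^ (k - s) * (α i s * (δ i s : ℝ))
                ≤ κ * L ^ 2 * C * ((w i * B / (K:ℝ) ^ θ) * (1 / (1 - q))) :=
              mul_le_mul_of_nonneg_left (hinner i k) (by positivity)
            apply mul_le_mul (hαδ i k) h2 (by positivity) (by have := hw i; positivity)
        _ = (κ * L ^ 2 * C) * B ^ 2 * S3 / ((K:ℝ) ^ θ * (K:ℝ) ^ θ) * (1 / (1 - q)) := by
            rw [hS3, Finset.mul_sum, Finset.sum_div, Finset.sum_mul]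
            apply Finset.sum_congr rfl
            intro i _
            field_simp
    calc 2 * L * ∑ k ∈ Finset.range K,
          (1 / (n : ℝ)) * ∑ i, α i k * (δ i k : ℝ) *
            (κ * L ^ 2 * C * ∑ s ∈ Finset.range (k + 1), q ^ (k - s) * (α i s * (δ i s : ℝ)))
        ≤ 2 * L * ((K:ℝ) * ((1 / (n:ℝ)) * ((κ * L ^ 2 * C) * B ^ 2 * S3
              / ((K:ℝ) ^ θ * (K:ℝ) ^ θ) * (1 / (1 - q))))) := by
          apply mul_le_mul_of_nonneg_left _ (by positivity)
          calc ∑ k ∈ Finset.range K,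
                (1 / (n : ℝ)) * ∑ i, α i k * (δ i k : ℝ) *
                  (κ * L ^ 2 * C * ∑ s ∈ Finset.range (k + 1), q ^ (k - s) * (α i s * (δ i s : ℝ)))
              ≤ ∑ _k ∈ Finset.range K, (1 / (n:ℝ)) * ((κ * L ^ 2 * C) * B ^ 2 * S3
                  / ((K:ℝ) ^ θ * (K:ℝ) ^ θ) * (1 / (1 - q))) := Finset.sum_le_sum hterm
            _ = (K:ℝ) * ((1 / (n:ℝ)) * ((κ * L ^ 2 * C) * B ^ 2 * S3
                  / ((K:ℝ) ^ θ * (K:ℝ) ^ θ) * (1 / (1 - q)))) := by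
                rw [Finset.sum_const, Finset.card_range, nsmul_eq_mul]
      _ = (2 * L * (κ * L ^ 2 * C) * B ^ 2 * (S3 / n) / (1 - q)) / (K:ℝ) ^ (2 * θ - 1) := by
          rw [hmul]
          field_simp
end

section
/- Let θ ∈ (1/2, 1), B > 0 and w_1,…,w_n ≥ 1. Suppose the activation indicators satisfy δ_i[0] = 1 for every i, define c_i[k] := ∑_{ℓ=0}^k δ_i[ℓ], and suppose the step-sizes are α_i[k] := w_i B / (c_i[k])^θ. Then there exists a constant A > 0 such that b_1[K] + b_2[K] + b_3[K] ≤ A for all integers K ≥ 1. -/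
open Finset

private lemma tri_swap (K : ℕ) (g : ℕ → ℕ → ℝ) :
    ∑ k ∈ Finset.range K, ∑ s ∈ Finset.range (k + 1), g k s
      = ∑ s ∈ Finset.range K, ∑ k ∈ Finset.Ico s K, g k s := by
  have h := Finset.sum_Ico_Ico_comm 0 K (fun i j => g j i)
  simp only [Finset.range_eq_Ico]
  exact h.symm

/-- Lemma 5: with diminishing step-sizes `α_i[k] = w_i B / (c_i[k])^θ`, `θ ∈ (1/2, 1)`,
there is a constant `A > 0` with `b₁[K] + b₂[K] + b₃[K] ≤ A` for all `K ≥ 1`. -/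
theorem stmt_7
    {n : ℕ} (hn : 1 ≤ n)
    {κ L C q : ℝ} (hκ : 0 < κ) (hL : 0 < L) (hC : 0 < C) (hq : q ∈ Set.Ioo (0:ℝ) 1)
    (a : Fin n → ℝ) (ha : ∀ i, 0 ≤ a i)
    {θ B : ℝ} (hθ : θ ∈ Set.Ioo (1/2 : ℝ) 1) (hB : 0 < B)
    (w : Fin n → ℝ) (hw : ∀ i, 1 ≤ w i)
    (δ : Fin n → ℕ → ℕ) (hδ : ∀ i k, δ i k = 0 ∨ δ i k = 1) (hδ0 : ∀ i, δ i 0 = 1)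
    (α : Fin n → ℕ → ℝ)
    (hα : ∀ i k, α i k =
      w i * B / ((∑ ℓ ∈ Finset.range (k + 1), δ i ℓ : ℕ) : ℝ) ^ θ) :
    ∃ A : ℝ, 0 < A ∧
      ∀ K : ℕ, 1 ≤ K →
        L * (∑ k ∈ Finset.range K,
            ((1 / (n : ℝ)) * ∑ i, α i k * (δ i k : ℝ)) ^ 2)
        + 2 * L * (∑ k ∈ Finset.range K,
            (1 / (n : ℝ)) * ∑ i, α i k * (δ i k : ℝ) * (κ * L * C * a i * q ^ k))
        + 2 * L * (∑ k ∈ Finset.range K,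
            (1 / (n : ℝ)) * ∑ i, α i k * (δ i k : ℝ) *
              (κ * L ^ 2 * C *
                ∑ s ∈ Finset.range (k + 1), q ^ (k - s) * (α i s * (δ i s : ℝ))))
        ≤ A := by
  obtain ⟨hq0, hq1⟩ := hq
  obtain ⟨hθhalf, hθ1⟩ := hθ
  have hθ0 : (0:ℝ) ≤ θ := by linarith
  set X : Fin n → ℕ → ℝ := fun i k => α i k * (δ i k : ℝ) with hXdef
  set c : Fin n → ℕ → ℕ := fun i k => ∑ ℓ ∈ Finset.range (k + 1), δ i ℓ with hcdef
  have hc1 : ∀ i k, 1 ≤ c i k := by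
    intro i k
    have : δ i 0 ≤ ∑ ℓ ∈ Finset.range (k + 1), δ i ℓ :=
      Finset.single_le_sum (f := fun ℓ => δ i ℓ) (fun _ _ => Nat.zero_le _)
        (Finset.mem_range.2 (Nat.succ_pos k))
    simpa [hcdef, hδ0 i] using this
  have hcR : ∀ i k, (1:ℝ) ≤ ((c i k : ℕ) : ℝ) := by
    intro i k; exact_mod_cast hc1 i k
  have hcpow1 : ∀ i k, (1:ℝ) ≤ ((c i k : ℕ) : ℝ) ^ θ := fun i k =>
    Real.one_le_rpow (hcR i k) hθ0
  have hcpow0 : ∀ i k, (0:ℝ) < ((c i k : ℕ) : ℝ) ^ θ := fun i k =>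
    lt_of_lt_of_le one_pos (hcpow1 i k)
  have hWpos : ∀ i, 0 < w i * B := fun i => mul_pos (lt_of_lt_of_le one_pos (hw i)) hB
  have hαc : ∀ i k, α i k = w i * B / ((c i k : ℕ) : ℝ) ^ θ := by
    intro i k; exact hα i k
  have hαnn : ∀ i k, 0 ≤ α i k := by
    intro i k; rw [hαc]; exact div_nonneg (hWpos i).le (hcpow0 i k).le
  have hαle : ∀ i k, α i k ≤ w i * B := by
    intro i k; rw [hαc]
    exact div_le_self (hWpos i).le (hcpow1 i k)
  have hδR : ∀ i k, (0:ℝ) ≤ (δ i k : ℝ) ∧ (δ i k : ℝ) ≤ 1 := by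
    intro i k
    rcases hδ i k with h | h <;> simp [h]
  have hXnn : ∀ i k, 0 ≤ X i k := fun i k =>
    mul_nonneg (hαnn i k) (hδR i k).1
  have hXle : ∀ i k, X i k ≤ w i * B := by
    intro i k
    calc X i k = α i k * (δ i k : ℝ) := rfl
      _ ≤ α i k * 1 := by
          exact mul_le_mul_of_nonneg_left (hδR i k).2 (hαnn i k)
      _ = α i k := mul_one _
      _ ≤ w i * B := hαle i k
  -- the p-series constant
  set Z : ℝ := ∑' m : ℕ, (((m : ℝ)) ^ (2 * θ))⁻¹ with hZdef
  have hZsum : Summable (fun m : ℕ => (((m : ℝ)) ^ (2 * θ))⁻¹) :=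
    Real.summable_nat_rpow_inv.2 (by linarith)
  have hZ0 : 0 ≤ Z := tsum_nonneg (fun m => by positivity)
  -- monotonicity of the counter at active times
  have hmono : ∀ i k₁ k₂, k₁ < k₂ → δ i k₂ = 1 → c i k₁ < c i k₂ := by
    intro i k₁ k₂ hk hδ2
    have hsub : Finset.range (k₁ + 1) ⊆ Finset.range (k₂ + 1) :=
      Finset.range_subset_range.2 (by omega)
    show (∑ ℓ ∈ Finset.range (k₁ + 1), δ i ℓ) < ∑ ℓ ∈ Finset.range (k₂ + 1), δ i ℓ
    refine Finset.sum_lt_sum_of_subset hsub (i := k₂) (Finset.mem_range.2 (by omega))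
      (by simp only [Finset.mem_range]; omega) (by omega) (fun _ _ _ => Nat.zero_le _)
  -- key square-sum bound
  have hsq : ∀ i, ∀ K : ℕ, ∑ k ∈ Finset.range K, (X i k) ^ 2 ≤ (w i * B) ^ 2 * Z := by
    intro i K
    have hterm : ∀ k, (X i k) ^ 2
        = if δ i k = 1 then (w i * B) ^ 2 * ((((c i k : ℕ) : ℝ)) ^ (2 * θ))⁻¹ else 0 := by
      intro k
      rcases hδ i k with h | h
      · simp [hXdef, h]
      · have hcast : ((c i k : ℕ) : ℝ) ^ (2 * θ)
            = (((c i k : ℕ) : ℝ) ^ θ) ^ 2 := by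
          rw [show (2:ℝ) * θ = θ * 2 by ring,
            Real.rpow_mul (by positivity), Real.rpow_two]
        simp only [hXdef, h, if_pos rfl, Nat.cast_one, mul_one, hαc i k]
        rw [div_pow, hcast, div_eq_mul_inv, if_true]
    calc ∑ k ∈ Finset.range K, (X i k) ^ 2
        = ∑ k ∈ (Finset.range K).filter (fun k => δ i k = 1),
            (w i * B) ^ 2 * ((((c i k : ℕ) : ℝ)) ^ (2 * θ))⁻¹ := by
          rw [Finset.sum_filter]
          exact Finset.sum_congr rfl (fun k _ => hterm k)
      _ = (w i * B) ^ 2 * ∑ k ∈ (Finset.range K).filter (fun k => δ i k = 1),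
            ((((c i k : ℕ) : ℝ)) ^ (2 * θ))⁻¹ := by rw [Finset.mul_sum]
      _ ≤ (w i * B) ^ 2 * Z := by
          refine mul_le_mul_of_nonneg_left ?_ (by positivity)
          have hinj : ∀ k₁ ∈ (Finset.range K).filter (fun k => δ i k = 1),
              ∀ k₂ ∈ (Finset.range K).filter (fun k => δ i k = 1),
              c i k₁ = c i k₂ → k₁ = k₂ := by
            intro k₁ h₁ k₂ h₂ hce
            simp only [Finset.mem_filter] at h₁ h₂
            by_contra hne
            rcases lt_or_gt_of_ne hne with h | h
            · exact absurd hce (Nat.ne_of_lt (hmono i k₁ k₂ h h₂.2))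
            · exact absurd hce.symm (Nat.ne_of_lt (hmono i k₂ k₁ h h₁.2))
          have himg := Finset.sum_image
            (f := fun m : ℕ => (((m : ℝ)) ^ (2 * θ))⁻¹) (g := c i)
            (s := (Finset.range K).filter (fun k => δ i k = 1)) hinj
          rw [← himg]
          exact Summable.sum_le_tsum _ (fun m _ => by positivity) hZsum
  -- geometric bounds
  set G : ℝ := (1 - q)⁻¹ with hGdef
  have hG0 : 0 < G := by
    rw [hGdef]; exact inv_pos.2 (by linarith)
  have hqsum : Summable (fun k : ℕ => q ^ k) :=
    summable_geometric_of_lt_one hq0.le hq1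
  have hgeom : ∀ K : ℕ, ∑ k ∈ Finset.range K, q ^ k ≤ G := by
    intro K
    have := Summable.sum_le_tsum (Finset.range K) (fun k _ => by positivity) hqsum
    rwa [tsum_geometric_of_lt_one hq0.le hq1] at this
  have hgeom' : ∀ k : ℕ, ∑ s ∈ Finset.range (k + 1), q ^ (k - s) ≤ G := by
    intro k
    have h := Finset.sum_range_reflect (fun j => q ^ j) (k + 1)
    simp only [Nat.add_sub_cancel] at h
    calc ∑ s ∈ Finset.range (k + 1), q ^ (k - s)
        = ∑ s ∈ Finset.range (k + 1), q ^ s := by rw [← h]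
      _ ≤ G := hgeom (k + 1)
  have hIco : ∀ s K : ℕ, ∑ k ∈ Finset.Ico s K, q ^ (k - s) ≤ G := by
    intro s K
    rw [Finset.sum_Ico_eq_sum_range]
    calc ∑ j ∈ Finset.range (K - s), q ^ (s + j - s)
        = ∑ j ∈ Finset.range (K - s), q ^ j := by
          exact Finset.sum_congr rfl (fun j _ => by congr 1; omega)
      _ ≤ G := hgeom (K - s)
  -- per-agent bound for the third term
  have hP : ∀ i, ∀ K : ℕ,
      ∑ k ∈ Finset.range K, X i k * ∑ s ∈ Finset.range (k + 1), q ^ (k - s) * X i s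
        ≤ G * ((w i * B) ^ 2 * Z) := by
    intro i K
    have step1 : ∑ k ∈ Finset.range K, X i k * ∑ s ∈ Finset.range (k + 1), q ^ (k - s) * X i s
        ≤ ∑ k ∈ Finset.range K, ∑ s ∈ Finset.range (k + 1),
            q ^ (k - s) * (((X i k) ^ 2 + (X i s) ^ 2) / 2) := by
      refine Finset.sum_le_sum (fun k _ => ?_)
      rw [Finset.mul_sum]
      refine Finset.sum_le_sum (fun s _ => ?_)
      have h1 : X i k * (q ^ (k - s) * X i s) = q ^ (k - s) * (X i k * X i s) := by ring
      rw [h1]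
      refine mul_le_mul_of_nonneg_left ?_ (by positivity)
      nlinarith [sq_nonneg (X i k - X i s)]
    have split : ∑ k ∈ Finset.range K, ∑ s ∈ Finset.range (k + 1),
            q ^ (k - s) * (((X i k) ^ 2 + (X i s) ^ 2) / 2)
        = (∑ k ∈ Finset.range K, ∑ s ∈ Finset.range (k + 1),
            q ^ (k - s) * (X i k) ^ 2 / 2)
          + ∑ k ∈ Finset.range K, ∑ s ∈ Finset.range (k + 1),
            q ^ (k - s) * (X i s) ^ 2 / 2 := by
      rw [← Finset.sum_add_distrib]
      refine Finset.sum_congr rfl (fun k _ => ?_)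
      rw [← Finset.sum_add_distrib]
      exact Finset.sum_congr rfl (fun s _ => by ring)
    have hS1 : ∑ k ∈ Finset.range K, ∑ s ∈ Finset.range (k + 1),
            q ^ (k - s) * (X i k) ^ 2 / 2
        ≤ (G / 2) * ∑ k ∈ Finset.range K, (X i k) ^ 2 := by
      rw [Finset.mul_sum]
      refine Finset.sum_le_sum (fun k _ => ?_)
      have : ∑ s ∈ Finset.range (k + 1), q ^ (k - s) * (X i k) ^ 2 / 2
          = (∑ s ∈ Finset.range (k + 1), q ^ (k - s)) * ((X i k) ^ 2 / 2) := by
        rw [Finset.sum_mul]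
        exact Finset.sum_congr rfl (fun s _ => by ring)
      rw [this]
      have := mul_le_mul_of_nonneg_right (hgeom' k) (by positivity : (0:ℝ) ≤ (X i k) ^ 2 / 2)
      linarith [this]
    have hS2 : ∑ k ∈ Finset.range K, ∑ s ∈ Finset.range (k + 1),
            q ^ (k - s) * (X i s) ^ 2 / 2
        ≤ (G / 2) * ∑ s ∈ Finset.range K, (X i s) ^ 2 := by
      rw [tri_swap K (fun k s => q ^ (k - s) * (X i s) ^ 2 / 2), Finset.mul_sum]
      refine Finset.sum_le_sum (fun s _ => ?_)
      have : ∑ k ∈ Finset.Ico s K, q ^ (k - s) * (X i s) ^ 2 / 2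
          = (∑ k ∈ Finset.Ico s K, q ^ (k - s)) * ((X i s) ^ 2 / 2) := by
        rw [Finset.sum_mul]
        exact Finset.sum_congr rfl (fun k _ => by ring)
      rw [this]
      have := mul_le_mul_of_nonneg_right (hIco s K) (by positivity : (0:ℝ) ≤ (X i s) ^ 2 / 2)
      linarith [this]
    have hsum := hsq i K
    calc ∑ k ∈ Finset.range K, X i k * ∑ s ∈ Finset.range (k + 1), q ^ (k - s) * X i s
        ≤ (G / 2) * ∑ k ∈ Finset.range K, (X i k) ^ 2
          + (G / 2) * ∑ k ∈ Finset.range K, (X i k) ^ 2 := by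
          rw [split] at step1
          linarith [hS1, hS2, step1]
      _ = G * ∑ k ∈ Finset.range K, (X i k) ^ 2 := by ring
      _ ≤ G * ((w i * B) ^ 2 * Z) :=
          mul_le_mul_of_nonneg_left hsum hG0.le
  -- the constant
  have hn0 : (0:ℝ) < (n:ℝ) := by exact_mod_cast hn
  set A1 : ℝ := (1 / (n:ℝ)) * ∑ i, (w i * B) ^ 2 * Z with hA1def
  set A2 : ℝ := (1 / (n:ℝ)) * ∑ i, (w i * B) * (κ * L * C * a i) * G with hA2def
  set A3 : ℝ := (1 / (n:ℝ)) * ∑ i, (κ * L ^ 2 * C) * (G * ((w i * B) ^ 2 * Z)) with hA3def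
  have hA1nn : 0 ≤ A1 := by
    refine mul_nonneg (by positivity) (Finset.sum_nonneg (fun i _ => by positivity))
  have hA2nn : 0 ≤ A2 := by
    refine mul_nonneg (by positivity) (Finset.sum_nonneg (fun i _ => ?_))
    have := ha i
    have := (hWpos i).le
    positivity
  have hA3nn : 0 ≤ A3 := by
    refine mul_nonneg (by positivity) (Finset.sum_nonneg (fun i _ => by positivity))
  refine ⟨L * A1 + 2 * L * A2 + 2 * L * A3 + 1, by positivity, ?_⟩
  intro K _
  -- first term
  have hb1 : L * (∑ k ∈ Finset.range K, ((1 / (n : ℝ)) * ∑ i, X i k) ^ 2) ≤ L * A1 := by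
    refine mul_le_mul_of_nonneg_left ?_ hL.le
    have step : ∀ k, ((1 / (n : ℝ)) * ∑ i, X i k) ^ 2 ≤ (1 / (n:ℝ)) * ∑ i, (X i k) ^ 2 := by
      intro k
      have hcs := sq_sum_le_card_mul_sum_sq (s := Finset.univ) (f := fun i => X i k)
      have hcard : ((Finset.univ : Finset (Fin n)).card : ℝ) = (n:ℝ) := by simp
      have hcs' : (∑ i, X i k) ^ 2 ≤ (n:ℝ) * ∑ i, (X i k) ^ 2 := by
        calc (∑ i, X i k) ^ 2 ≤ ((Finset.univ : Finset (Fin n)).card : ℝ) * ∑ i, (X i k) ^ 2 := by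
              exact_mod_cast hcs
          _ = (n:ℝ) * ∑ i, (X i k) ^ 2 := by rw [hcard]
      have h2 : ((1 / (n : ℝ)) * ∑ i, X i k) ^ 2 = (1/(n:ℝ))^2 * (∑ i, X i k) ^ 2 := by ring
      rw [h2]
      calc (1/(n:ℝ))^2 * (∑ i, X i k) ^ 2
          ≤ (1/(n:ℝ))^2 * ((n:ℝ) * ∑ i, (X i k) ^ 2) :=
            mul_le_mul_of_nonneg_left hcs' (by positivity)
        _ = (1 / (n:ℝ)) * ∑ i, (X i k) ^ 2 := by
            field_simp
    calc ∑ k ∈ Finset.range K, ((1 / (n : ℝ)) * ∑ i, X i k) ^ 2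
        ≤ ∑ k ∈ Finset.range K, (1 / (n:ℝ)) * ∑ i, (X i k) ^ 2 :=
          Finset.sum_le_sum (fun k _ => step k)
      _ = (1 / (n:ℝ)) * ∑ i, ∑ k ∈ Finset.range K, (X i k) ^ 2 := by
          rw [← Finset.mul_sum, Finset.sum_comm]
      _ ≤ A1 := by
          rw [hA1def]
          exact mul_le_mul_of_nonneg_left
            (Finset.sum_le_sum (fun i _ => hsq i K)) (by positivity)
  -- second term
  have hb2 : 2 * L * (∑ k ∈ Finset.range K,
      (1 / (n : ℝ)) * ∑ i, X i k * (κ * L * C * a i * q ^ k)) ≤ 2 * L * A2 := by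
    refine mul_le_mul_of_nonneg_left ?_ (by positivity)
    calc ∑ k ∈ Finset.range K, (1 / (n : ℝ)) * ∑ i, X i k * (κ * L * C * a i * q ^ k)
        ≤ ∑ k ∈ Finset.range K, (1 / (n : ℝ)) *
            ∑ i, (w i * B) * (κ * L * C * a i) * q ^ k := by
          refine Finset.sum_le_sum (fun k _ => ?_)
          refine mul_le_mul_of_nonneg_left (Finset.sum_le_sum (fun i _ => ?_)) (by positivity)
          have hfac : (0:ℝ) ≤ κ * L * C * a i * q ^ k := by
            have := ha i; positivity
          calc X i k * (κ * L * C * a i * q ^ k)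
              ≤ (w i * B) * (κ * L * C * a i * q ^ k) :=
                mul_le_mul_of_nonneg_right (hXle i k) hfac
            _ = (w i * B) * (κ * L * C * a i) * q ^ k := by ring
      _ = (1 / (n:ℝ)) * ∑ i, (w i * B) * (κ * L * C * a i) *
            ∑ k ∈ Finset.range K, q ^ k := by
          rw [← Finset.mul_sum, Finset.sum_comm]
          congr 1
          exact Finset.sum_congr rfl (fun i _ => by rw [Finset.mul_sum])
      _ ≤ A2 := by
          rw [hA2def]
          refine mul_le_mul_of_nonneg_left (Finset.sum_le_sum (fun i _ => ?_)) (by positivity)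
          have hfac : (0:ℝ) ≤ (w i * B) * (κ * L * C * a i) := by
            have := ha i; have := (hWpos i).le; positivity
          exact mul_le_mul_of_nonneg_left (hgeom K) hfac
  -- third term
  have hb3 : 2 * L * (∑ k ∈ Finset.range K,
      (1 / (n : ℝ)) * ∑ i, X i k *
        (κ * L ^ 2 * C * ∑ s ∈ Finset.range (k + 1), q ^ (k - s) * X i s)) ≤ 2 * L * A3 := by
    refine mul_le_mul_of_nonneg_left ?_ (by positivity)
    calc ∑ k ∈ Finset.range K, (1 / (n : ℝ)) * ∑ i, X i k *
          (κ * L ^ 2 * C * ∑ s ∈ Finset.range (k + 1), q ^ (k - s) * X i s)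
        = (1 / (n:ℝ)) * ∑ i, (κ * L ^ 2 * C) *
            ∑ k ∈ Finset.range K, X i k * ∑ s ∈ Finset.range (k + 1), q ^ (k - s) * X i s := by
          rw [← Finset.mul_sum, Finset.sum_comm]
          congr 1
          refine Finset.sum_congr rfl (fun i _ => ?_)
          rw [Finset.mul_sum]
          exact Finset.sum_congr rfl (fun k _ => by ring)
      _ ≤ A3 := by
          rw [hA3def]
          refine mul_le_mul_of_nonneg_left (Finset.sum_le_sum (fun i _ => ?_)) (by positivity)
          exact mul_le_mul_of_nonneg_left (hP i K) (by positivity)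
  calc L * (∑ k ∈ Finset.range K, ((1 / (n : ℝ)) * ∑ i, α i k * (δ i k : ℝ)) ^ 2)
        + 2 * L * (∑ k ∈ Finset.range K,
            (1 / (n : ℝ)) * ∑ i, α i k * (δ i k : ℝ) * (κ * L * C * a i * q ^ k))
        + 2 * L * (∑ k ∈ Finset.range K,
            (1 / (n : ℝ)) * ∑ i, α i k * (δ i k : ℝ) *
              (κ * L ^ 2 * C *
                ∑ s ∈ Finset.range (k + 1), q ^ (k - s) * (α i s * (δ i s : ℝ))))
      ≤ L * A1 + 2 * L * A2 + 2 * L * A3 := by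
        exact add_le_add (add_le_add hb1 hb2) hb3
    _ ≤ L * A1 + 2 * L * A2 + 2 * L * A3 + 1 := by linarith
end

section
/- Let θ ∈ (1/2, 1), B > 0, w_1,…,w_n ≥ 1, and let τ̄ ≥ 1 be an integer. Suppose the activation indicators satisfy δ_i[0] = 1 for every i and, for every i and every k ∈ ℕ, at least one of δ_i[k], δ_i[k+1], …, δ_i[k+τ̄−1] equals 1; define c_i[k] := ∑_{ℓ=0}^k δ_i[ℓ] and α_i[k] := w_i B / (c_i[k])^θ. Suppose moreover that for every k ∈ ℕ there exists i with δ_i[k] = 1. Then for all k ∈ ℕ, B / (n (k+1)^θ) ≤ (1/n) ∑_{i=1}^n α_i[k] δ_i[k] ≤ ( (1/n) ∑_{i=1}^n w_i ) · B · τ̄^θ / (k+1)^θ. -/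
open Finset

lemma stmt8_aux {τ : ℕ} (δ : ℕ → ℕ)
    (hδ0 : δ 0 = 1) (hδ : ∀ k, δ k = 0 ∨ δ k = 1)
    (hgap : ∀ k, ∃ j, j < τ ∧ δ (k + j) = 1) :
    ∀ k, ∃ j, j < τ ∧ δ (k + 1 + j) = 1 ∧
      k + 1 + j ≤ τ * ∑ ℓ ∈ Finset.range (k + 1), δ ℓ := by
  intro k
  induction k with
  | zero =>
    obtain ⟨j, hj, hj1⟩ := hgap 1
    refine ⟨j, hj, by show δ (1 + j) = 1; exact hj1, ?_⟩
    simp only [Nat.zero_add, Finset.sum_range_one, hδ0, Nat.mul_one]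
    omega
  | succ k ih =>
    obtain ⟨j, hj, hj1, hle⟩ := ih
    rcases hδ (k + 1) with h0 | h1
    · have hj0 : j ≠ 0 := by
        intro h; rw [h] at hj1; simp at hj1; omega
      refine ⟨j - 1, by omega, ?_, ?_⟩
      · have h' : k + 1 + 1 + (j - 1) = k + 1 + j := by omega
        rw [h']; exact hj1
      · rw [Finset.sum_range_succ, h0]
        simp only [Nat.add_zero]
        set M := τ * ∑ ℓ ∈ Finset.range (k + 1), δ ℓ with hM
        omega
    · obtain ⟨j', hj', hj'1⟩ := hgap (k + 2)
      refine ⟨j', hj', by simpa [show k + 1 + 1 + j' = k + 2 + j' by omega] using hj'1, ?_⟩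
      rw [Finset.sum_range_succ, h1, Nat.mul_add, Nat.mul_one]
      set M := τ * ∑ ℓ ∈ Finset.range (k + 1), δ ℓ with hM
      omega

/-- Remark 2 (variant): with diminishing step-sizes `α_i[k] = w_i B / (c_i[k])^θ`,
bounded inter-activation gaps `τ̄`, and at least one active agent at every index,
`B/(n (k+1)^θ) ≤ (1/n) ∑_i α_i[k] δ_i[k] ≤ ((1/n) ∑_i w_i) B τ̄^θ / (k+1)^θ`. -/
theorem stmt_8
    {n : ℕ} (hn : 1 ≤ n)
    {θ B : ℝ} (hθ : θ ∈ Set.Ioo (1/2 : ℝ) 1) (hB : 0 < B)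
    (w : Fin n → ℝ) (hw : ∀ i, 1 ≤ w i)
    (τ : ℕ) (hτ : 1 ≤ τ)
    (δ : Fin n → ℕ → ℕ) (hδ : ∀ i k, δ i k = 0 ∨ δ i k = 1) (hδ0 : ∀ i, δ i 0 = 1)
    (hgap : ∀ i k, ∃ j, j < τ ∧ δ i (k + j) = 1)
    (α : Fin n → ℕ → ℝ)
    (hα : ∀ i k, α i k =
      w i * B / ((∑ ℓ ∈ Finset.range (k + 1), δ i ℓ : ℕ) : ℝ) ^ θ)
    (hsome : ∀ k, ∃ i, δ i k = 1)
    (k : ℕ) :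
    B / ((n : ℝ) * ((k : ℝ) + 1) ^ θ) ≤ (1 / (n : ℝ)) * ∑ i, α i k * (δ i k : ℝ) ∧
    (1 / (n : ℝ)) * ∑ i, α i k * (δ i k : ℝ) ≤
      ((1 / (n : ℝ)) * ∑ i, w i) * B * (τ : ℝ) ^ θ / ((k : ℝ) + 1) ^ θ := by
  obtain ⟨hθ1, hθ2⟩ := hθ
  have hθpos : 0 < θ := by linarith
  have hn0 : (0 : ℝ) < n := by exact_mod_cast hn
  have hk1 : (0 : ℝ) < (k : ℝ) + 1 := by positivity
  have hτ0 : (0 : ℝ) < (τ : ℝ) := by exact_mod_cast hτ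
  -- c_i bounds
  set S : Fin n → ℕ := fun i => ∑ ℓ ∈ Finset.range (k + 1), δ i ℓ with hS
  have hS1 : ∀ i, 1 ≤ S i := by
    intro i
    have : δ i 0 ≤ S i := by
      apply Finset.single_le_sum (f := fun ℓ => δ i ℓ) (fun _ _ => Nat.zero_le _)
      simp
    have h0 := hδ0 i
    omega
  have hSk : ∀ i, S i ≤ k + 1 := by
    intro i
    calc S i ≤ ∑ _ℓ ∈ Finset.range (k + 1), 1 := by
          apply Finset.sum_le_sum
          intro ℓ _
          rcases hδ i ℓ with h | h <;> omega
      _ = k + 1 := by simp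
  have hSτ : ∀ i, k + 1 ≤ τ * S i := by
    intro i
    obtain ⟨j, _, _, h⟩ := stmt8_aux (δ i) (hδ0 i) (hδ i) (hgap i) k
    show k + 1 ≤ τ * ∑ ℓ ∈ Finset.range (k + 1), δ i ℓ
    omega
  have hSpos : ∀ i, (0 : ℝ) < (S i : ℝ) := by
    intro i; exact_mod_cast Nat.lt_of_lt_of_le Nat.zero_lt_one (hS1 i)
  have hSθ : ∀ i, (0 : ℝ) < ((S i : ℝ)) ^ θ := fun i => Real.rpow_pos_of_pos (hSpos i) θ
  have hk1θ : (0 : ℝ) < ((k : ℝ) + 1) ^ θ := Real.rpow_pos_of_pos hk1 θ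
  have hτθ : (0 : ℝ) < (τ : ℝ) ^ θ := Real.rpow_pos_of_pos hτ0 θ
  have hαpos : ∀ i, 0 < α i k := by
    intro i
    rw [hα i k]
    have hwi : 0 < w i := lt_of_lt_of_le one_pos (hw i)
    exact div_pos (mul_pos hwi hB) (hSθ i)
  -- upper bound on each α i k
  have hαub : ∀ i, α i k ≤ w i * B * (τ : ℝ) ^ θ / ((k : ℝ) + 1) ^ θ := by
    intro i
    rw [hα i k, div_le_div_iff₀ (hSθ i) hk1θ]
    have h1 : ((k : ℝ) + 1) ^ θ ≤ (τ : ℝ) ^ θ * ((S i : ℝ)) ^ θ := by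
      rw [← Real.mul_rpow (le_of_lt hτ0) (le_of_lt (hSpos i))]
      apply Real.rpow_le_rpow (le_of_lt hk1) _ (le_of_lt hθpos)
      have := hSτ i
      push_cast
      exact_mod_cast this
    have hwB : 0 ≤ w i * B := le_of_lt (mul_pos (lt_of_lt_of_le one_pos (hw i)) hB)
    calc w i * B * ((k : ℝ) + 1) ^ θ ≤ w i * B * ((τ : ℝ) ^ θ * ((S i : ℝ)) ^ θ) :=
          mul_le_mul_of_nonneg_left h1 hwB
      _ = w i * B * (τ : ℝ) ^ θ * ((S i : ℝ)) ^ θ := by ring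
  -- lower bound on each α i k
  have hαlb : ∀ i, B / ((k : ℝ) + 1) ^ θ ≤ α i k := by
    intro i
    rw [hα i k]
    apply div_le_div₀ (le_of_lt (mul_pos (lt_of_lt_of_le one_pos (hw i)) hB))
    · nlinarith [hw i, hB.le]
    · exact hSθ i
    · apply Real.rpow_le_rpow (le_of_lt (hSpos i)) _ (le_of_lt hθpos)
      exact_mod_cast hSk i
  constructor
  · -- lower bound
    obtain ⟨i0, hi0⟩ := hsome k
    have hterm : B / ((k : ℝ) + 1) ^ θ ≤ α i0 k * (δ i0 k : ℝ) := by
      rw [hi0]; simpa using hαlb i0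
    have hsum : B / ((k : ℝ) + 1) ^ θ ≤ ∑ i, α i k * (δ i k : ℝ) := by
      refine le_trans hterm ?_
      apply Finset.single_le_sum (f := fun i => α i k * (δ i k : ℝ)) _ (Finset.mem_univ i0)
      intro i _
      exact mul_nonneg (le_of_lt (hαpos i)) (Nat.cast_nonneg _)
    calc B / ((n : ℝ) * ((k : ℝ) + 1) ^ θ)
        = (1 / (n : ℝ)) * (B / ((k : ℝ) + 1) ^ θ) := by
          field_simp
      _ ≤ (1 / (n : ℝ)) * ∑ i, α i k * (δ i k : ℝ) := by
          apply mul_le_mul_of_nonneg_left hsum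
          positivity
  · -- upper bound
    have hsum : ∑ i, α i k * (δ i k : ℝ) ≤ (∑ i, w i) * (B * (τ : ℝ) ^ θ / ((k : ℝ) + 1) ^ θ) := by
      rw [Finset.sum_mul]
      apply Finset.sum_le_sum
      intro i _
      rcases hδ i k with h | h
      · rw [h]
        simp only [Nat.cast_zero, mul_zero]
        have hwi : 0 < w i := lt_of_lt_of_le one_pos (hw i)
        positivity
      · rw [h]
        simp only [Nat.cast_one, mul_one]
        calc α i k ≤ w i * B * (τ : ℝ) ^ θ / ((k : ℝ) + 1) ^ θ := hαub i
          _ = w i * (B * (τ : ℝ) ^ θ / ((k : ℝ) + 1) ^ θ) := by ring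
    calc (1 / (n : ℝ)) * ∑ i, α i k * (δ i k : ℝ)
        ≤ (1 / (n : ℝ)) * ((∑ i, w i) * (B * (τ : ℝ) ^ θ / ((k : ℝ) + 1) ^ θ)) := by
          apply mul_le_mul_of_nonneg_left hsum
          positivity
      _ = ((1 / (n : ℝ)) * ∑ i, w i) * B * (τ : ℝ) ^ θ / ((k : ℝ) + 1) ^ θ := by ring
end

section
/- Let θ ∈ (0,1) and B > 0. There exist constants A_1, A_2, A_3 > 0, depending only on n, μ, M, L, C, q, B, θ and a_1,…,a_n, such that the following holds for every integer K ≥ 1: if the sequences (z_i, x̄) satisfy the assumptions in the context with δ_i[k] = 1 for all i and all k (every agent active at every index), and with constant step-sizes α_i[k] = B / K^θ for all i and k, with the gradient bound and the consensus bound, then p̄_i^{(K)} = 1/n for every i, the minimizer x*_K of the reweighted objective equals x*, and (1/K) ∑_{k=0}^{K−1} ‖x̄[k] − x*‖² ≤ n(A_1 + A_3)/(2μB K^θ) + nA_2/(2μB K) + n‖x̄[0] − x*‖²/(2μB K^{1−θ}). -/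
open Finset
open scoped RealInnerProductSpace

section Aux
variable {E : Type*} [NormedAddCommGroup E] [InnerProductSpace ℝ E] [CompleteSpace E]

lemma geom_sum_le_one_div' {q : ℝ} (h0 : 0 ≤ q) (h1 : q < 1) (m : ℕ) :
    ∑ i ∈ Finset.range m, q ^ i ≤ 1 / (1 - q) := by
  have hne : q ≠ 1 := ne_of_lt h1
  rw [geom_sum_eq hne]
  have hq1 : (0:ℝ) < 1 - q := by linarith
  have : (q ^ m - 1) / (q - 1) = (1 - q ^ m) / (1 - q) := by
    rw [← neg_div_neg_eq]; ring_nf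
  rw [this, div_le_div_iff₀ hq1 hq1]
  nlinarith [pow_nonneg h0 m]

lemma hasGradientAt_normSq' (x : E) : HasGradientAt (fun y : E => ‖y‖ ^ 2) ((2:ℝ) • x) x := by
  rw [hasGradientAt_iff_isLittleO]
  have key : ∀ y : E, ‖y‖ ^ 2 - ‖x‖ ^ 2 - ⟪(2:ℝ) • x, y - x⟫ = ‖y - x‖ ^ 2 := by
    intro y
    rw [real_inner_smul_left, inner_sub_right, norm_sub_sq_real,
      real_inner_self_eq_norm_sq, real_inner_comm]
    ring
  simp only [key]
  rw [Asymptotics.isLittleO_iff]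
  intro c hc
  have : ∀ᶠ y in nhds x, ‖y - x‖ ≤ c := by
    filter_upwards [Metric.ball_mem_nhds x hc] with y hy
    rw [Metric.mem_ball, dist_eq_norm] at hy
    exact le_of_lt hy
  filter_upwards [this] with y hy
  have h0 : (0:ℝ) ≤ ‖y - x‖ := norm_nonneg _
  simp only [Real.norm_eq_abs, abs_pow, abs_norm]
  calc ‖y - x‖ ^ 2 = ‖y - x‖ * ‖y - x‖ := sq ‖y - x‖
    _ ≤ c * ‖y - x‖ := mul_le_mul_of_nonneg_right hy h0

lemma convex_firstOrder {g : E → ℝ} (hg : ConvexOn ℝ Set.univ g) {x G : E}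
    (hx : HasGradientAt g G x) (y : E) : g x + ⟪G, y - x⟫ ≤ g y := by
  set v := y - x with hv
  set φ : ℝ → E := fun t : ℝ => x + t • v with hφdef
  have hline : HasDerivAt φ v 0 := by
    rw [hφdef]
    simpa using ((hasDerivAt_id (0:ℝ)).smul_const v).const_add x
  have hF : HasFDerivAt g (InnerProductSpace.toDual ℝ E G) (φ 0) := by
    have := hasGradientAt_iff_hasFDerivAt.mp hx
    simpa [hφdef] using this
  have hd : HasDerivAt (fun t : ℝ => g (φ t)) ⟪G, v⟫ 0 := by
    have := hF.comp_hasDerivAt (f := φ) (x := (0:ℝ)) hline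
    simp only [InnerProductSpace.toDual_apply_apply] at this
    exact this
  have hconv : ConvexOn ℝ Set.univ (fun t : ℝ => g (φ t)) := by
    have := hg.comp_affineMap (AffineMap.lineMap x y : ℝ →ᵃ[ℝ] E)
    have heq : (g ∘ (AffineMap.lineMap x y : ℝ →ᵃ[ℝ] E)) = fun t : ℝ => g (φ t) := by
      funext t
      simp only [Function.comp_apply, AffineMap.lineMap_apply, hφdef, hv, vsub_eq_sub,
        vadd_eq_add]
      rw [add_comm]
    rw [heq] at this
    simpa using this
  have hle := hconv.le_slope_of_hasDerivAt (Set.mem_univ (0:ℝ)) (Set.mem_univ (1:ℝ))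
    zero_lt_one hd
  have hslope : slope (fun t : ℝ => g (φ t)) 0 1 = g y - g x := by
    simp [slope_def_field, hφdef, hv]
  rw [hslope] at hle
  linarith

lemma grad_mono {g : E → ℝ} (hd : Differentiable ℝ g) {μ : ℝ}
    (hsc : ConvexOn ℝ Set.univ (fun x => g x - μ / 2 * ‖x‖ ^ 2)) (x y : E) :
    μ * ‖x - y‖ ^ 2 ≤ ⟪gradient g x - gradient g y, x - y⟫ := by
  have hgrad : ∀ w : E, HasGradientAt (fun u => g u - μ / 2 * ‖u‖ ^ 2)
      (gradient g w - μ • w) w := by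
    intro w
    have h1 : HasFDerivAt g (InnerProductSpace.toDual ℝ E (gradient g w)) w :=
      hasGradientAt_iff_hasFDerivAt.mp (hd w).hasGradientAt
    have h2 : HasFDerivAt (fun u : E => μ / 2 * ‖u‖ ^ 2)
        ((μ / 2) • (InnerProductSpace.toDual ℝ E ((2:ℝ) • w))) w :=
      (hasGradientAt_iff_hasFDerivAt.mp (hasGradientAt_normSq' w)).const_mul (μ / 2)
    have h3 := h1.fun_sub h2
    rw [hasGradientAt_iff_hasFDerivAt]
    refine h3.congr_fderiv ?_
    ext u
    simp [InnerProductSpace.toDual_apply_apply, inner_sub_left, real_inner_smul_left]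
    ring
  have h1 := convex_firstOrder hsc (hgrad x) y
  have h2 := convex_firstOrder hsc (hgrad y) x
  have e1 : ⟪gradient g x - μ • x, y - x⟫
      = ⟪gradient g x, y - x⟫ - μ * ⟪x, y - x⟫ := by
    rw [inner_sub_left, real_inner_smul_left]
  have e2 : ⟪gradient g y - μ • y, x - y⟫
      = ⟪gradient g y, x - y⟫ - μ * ⟪y, x - y⟫ := by
    rw [inner_sub_left, real_inner_smul_left]
  rw [e1] at h1
  rw [e2] at h2
  have e3 : ⟪gradient g y, x - y⟫ = -⟪gradient g y, y - x⟫ := by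
    rw [show (x - y : E) = -(y - x) from by abel, inner_neg_right]
  have e6 : ⟪y, x - y⟫ = -⟪y, y - x⟫ := by
    rw [show (x - y : E) = -(y - x) from by abel, inner_neg_right]
  have e4 : ⟪gradient g x - gradient g y, x - y⟫
      = -(⟪gradient g x, y - x⟫ - ⟪gradient g y, y - x⟫) := by
    rw [inner_sub_left, show (x - y : E) = -(y - x) from by abel, inner_neg_right,
      inner_neg_right]
    ring
  have e5 : ⟪x, y - x⟫ - ⟪y, y - x⟫ = -‖x - y‖ ^ 2 := by
    rw [← inner_sub_left, show (y - x : E) = -(x - y) from by abel, inner_neg_right,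
      real_inner_self_eq_norm_sq]
  rw [e4]
  rw [e3, e6] at h2
  have e5m : μ * ⟪x, y - x⟫ - μ * ⟪y, y - x⟫ = -(μ * ‖x - y‖ ^ 2) := by
    rw [← mul_sub, e5]; ring
  linarith

end Aux

set_option maxHeartbeats 2000000 in
/-- Corollary (semi-synchronous gradient push, constant step-size): with all agents
active at every index and constant step-sizes `α_i[k] = B/K^θ`, the weights satisfy
`p̄_i = 1/n`, the reweighted minimizer equals the global minimizer `x*`, and
`(1/K) ∑_{k<K} ‖x̄[k] − x*‖² ≤ n(A₁+A₃)/(2μB K^θ) + nA₂/(2μB K) + n‖x̄[0] − x*‖²/(2μB K^{1−θ})`. -/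
theorem stmt_10
    {n d : ℕ} (hn : 1 ≤ n) (hd : 1 ≤ d)
    {μ M : ℝ} (hμ : 0 < μ) (hμM : μ ≤ M)
    (f : Fin n → EuclideanSpace ℝ (Fin d) → ℝ)
    (hdiff : ∀ i, Differentiable ℝ (f i))
    (hsc : ∀ i, ConvexOn ℝ Set.univ (fun x => f i x - μ / 2 * ‖x‖ ^ 2))
    (hlip : ∀ i x y, ‖gradient (f i) x - gradient (f i) y‖ ≤ M * ‖x - y‖)
    (xstar : EuclideanSpace ℝ (Fin d))
    (hxstar : ∀ y, ∑ i, f i xstar ≤ ∑ i, f i y)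
    (L : ℝ) (hL : 0 < L)
    (C q : ℝ) (hC : 0 < C) (hq : q ∈ Set.Ioo (0:ℝ) 1)
    (a : Fin n → ℝ) (ha : ∀ i, 0 ≤ a i)
    {θ B : ℝ} (hθ : θ ∈ Set.Ioo (0:ℝ) 1) (hB : 0 < B) :
    ∃ A₁ A₂ A₃ : ℝ, 0 < A₁ ∧ 0 < A₂ ∧ 0 < A₃ ∧
      ∀ K : ℕ, 1 ≤ K →
      ∀ δ : Fin n → ℕ → ℕ, (∀ i k, δ i k = 1) →
      ∀ α : Fin n → ℕ → ℝ, (∀ i k, α i k = B / (K : ℝ) ^ θ) →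
      ∀ z : Fin n → ℕ → EuclideanSpace ℝ (Fin d),
      ∀ xbar : ℕ → EuclideanSpace ℝ (Fin d),
      (∀ k, xbar (k + 1) =
        xbar k - ((n : ℝ))⁻¹ • ∑ i, (α i k * (δ i k : ℝ)) • gradient (f i) (z i k)) →
      (∀ i k, ‖gradient (f i) (z i k)‖ ≤ L) →
      (∀ i k, ‖gradient (f i) (xbar k)‖ ≤ L) →
      (∀ i k, ‖z i k - xbar k‖ ≤
        C * q ^ k * a i +
          C * L * ∑ s ∈ Finset.range (k + 1), q ^ (k - s) * (α i s * (δ i s : ℝ))) →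
      (∀ i, 0 < ∑ k ∈ Finset.range K, α i k * (δ i k : ℝ)) →
      ∀ xK : EuclideanSpace ℝ (Fin d),
      (∀ y, ∑ i, ((∑ k ∈ Finset.range K, α i k * (δ i k : ℝ)) /
              (∑ j, ∑ k ∈ Finset.range K, α j k * (δ j k : ℝ))) * f i xK ≤
            ∑ i, ((∑ k ∈ Finset.range K, α i k * (δ i k : ℝ)) /
              (∑ j, ∑ k ∈ Finset.range K, α j k * (δ j k : ℝ))) * f i y) →
      (∀ i, (∑ k ∈ Finset.range K, α i k * (δ i k : ℝ)) /
          (∑ j, ∑ k ∈ Finset.range K, α j k * (δ j k : ℝ)) = 1 / (n : ℝ)) ∧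
      xK = xstar ∧
      (1 / (K : ℝ)) * ∑ k ∈ Finset.range K, ‖xbar k - xstar‖ ^ 2 ≤
        (n : ℝ) * (A₁ + A₃) / (2 * μ * B * (K : ℝ) ^ θ)
          + (n : ℝ) * A₂ / (2 * μ * B * (K : ℝ))
          + (n : ℝ) * ‖xbar 0 - xstar‖ ^ 2 / (2 * μ * B * (K : ℝ) ^ (1 - θ)) := by
  obtain ⟨hq0, hq1⟩ := hq
  obtain ⟨hθ0, hθ1⟩ := hθ
  have hM : 0 < M := lt_of_lt_of_le hμ hμM
  have hn0 : (0:ℝ) < n := by exact_mod_cast hn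
  have hq' : (0:ℝ) < 1 - q := by linarith
  set Aa : ℝ := ∑ i, a i with hAa
  have hAa0 : 0 ≤ Aa := Finset.sum_nonneg fun i _ => ha i
  set P : ℝ := 2*M*L*C*Aa/((n:ℝ)*μ*(1-q)) with hP
  set P0 : ℝ := 2*M*L*C/((n:ℝ)*μ*(1-q)) with hP0
  set Q : ℝ := 2*M*C*L^2/(μ*(1-q)) + L^2 with hQ
  have hden : (0:ℝ) < (n:ℝ)*μ*(1-q) := mul_pos (mul_pos hn0 hμ) hq'
  have h2MLC : (0:ℝ) < 2*M*L*C := mul_pos (mul_pos (mul_pos two_pos hM) hL) hC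
  have hPpos : 0 ≤ P := div_nonneg (mul_nonneg h2MLC.le hAa0) hden.le
  have hP0pos : 0 < P0 := div_pos h2MLC hden
  have hQpos : 0 < Q :=
    add_pos (div_pos (mul_pos (mul_pos (mul_pos two_pos hM) hC) (pow_pos hL 2))
      (mul_pos hμ hq')) (pow_pos hL 2)
  -- gradient monotonicity
  have hmono : ∀ (i : Fin n) x y, μ * ‖x - y‖ ^ 2 ≤
      ⟪gradient (f i) x - gradient (f i) y, x - y⟫ :=
    fun i => grad_mono (hdiff i) (hsc i)
  -- gradient of the sum vanishes at xstar
  have hgradsum0 : ∑ i, gradient (f i) xstar = 0 := by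
    have hFgrad : HasFDerivAt (fun y => ∑ i, f i y)
        (∑ i, InnerProductSpace.toDual ℝ (EuclideanSpace ℝ (Fin d))
          (gradient (f i) xstar)) xstar :=
      HasFDerivAt.fun_sum fun i _ =>
        hasGradientAt_iff_hasFDerivAt.mp ((hdiff i xstar).hasGradientAt)
    have hlocmin : IsLocalMin (fun y => ∑ i, f i y) xstar :=
      Filter.Eventually.of_forall hxstar
    have h0 := hlocmin.hasFDerivAt_eq_zero hFgrad
    have h1 : (InnerProductSpace.toDual ℝ (EuclideanSpace ℝ (Fin d)))
        (∑ i, gradient (f i) xstar) = 0 := by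
      rw [map_sum]; exact h0
    exact (map_eq_zero_iff _ (InnerProductSpace.toDual ℝ _).injective).mp h1
  -- boundedness of iterates
  have hball0 : ∀ x : EuclideanSpace ℝ (Fin d), (∀ i, ‖gradient (f i) x‖ ≤ L) →
      μ * ‖x - xstar‖ ≤ L := by
    intro x hgb
    have h2 : ∑ i, ⟪gradient (f i) x - gradient (f i) xstar, x - xstar⟫
        = ⟪∑ i, gradient (f i) x, x - xstar⟫ := by
      rw [← sum_inner, Finset.sum_sub_distrib, hgradsum0, sub_zero]
    have hsum : (n:ℝ) * μ * ‖x - xstar‖^2 ≤ ⟪∑ i, gradient (f i) x, x - xstar⟫ := by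
      calc (n:ℝ)*μ*‖x - xstar‖^2 = ∑ _i : Fin n, μ*‖x-xstar‖^2 := by
            rw [Finset.sum_const, card_univ, Fintype.card_fin, nsmul_eq_mul]; ring
        _ ≤ ∑ i, ⟪gradient (f i) x - gradient (f i) xstar, x - xstar⟫ :=
            Finset.sum_le_sum (fun i _ => hmono i x xstar)
        _ = _ := h2
    have hub : ⟪∑ i, gradient (f i) x, x - xstar⟫ ≤ ((n:ℝ)*L) * ‖x - xstar‖ := by
      calc ⟪∑ i, gradient (f i) x, x - xstar⟫
          ≤ ‖∑ i, gradient (f i) x‖ * ‖x - xstar‖ := real_inner_le_norm _ _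
        _ ≤ ((n:ℝ)*L) * ‖x-xstar‖ := by
            refine mul_le_mul_of_nonneg_right ?_ (norm_nonneg _)
            calc ‖∑ i, gradient (f i) x‖ ≤ ∑ i, ‖gradient (f i) x‖ := norm_sum_le _ _
              _ ≤ ∑ _i : Fin n, L := Finset.sum_le_sum fun i _ => hgb i
              _ = (n:ℝ)*L := by
                  rw [Finset.sum_const, card_univ, Fintype.card_fin, nsmul_eq_mul]
    rcases eq_or_lt_of_le (norm_nonneg (x - xstar)) with h|h
    · rw [← h]; simpa using hL.le
    · nlinarith [mul_pos hn0 h]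
  -- choose the constants
  refine ⟨B^2*Q/(2*(n:ℝ)), B*(P+P0)/(n:ℝ), B^2*Q/(2*(n:ℝ)),
    div_pos (mul_pos (pow_pos hB 2) hQpos) (mul_pos two_pos hn0),
    div_pos (mul_pos hB (by linarith : (0:ℝ) < P + P0)) hn0,
    div_pos (mul_pos (pow_pos hB 2) hQpos) (mul_pos two_pos hn0), ?_⟩
  intro K hK δ hδ α hα z xbar hrec hgz hgx hcons hp xK hxK
  have hKpos : (0:ℝ) < K := by exact_mod_cast hK
  set T : ℝ := (K:ℝ)^θ with hT
  have hTpos : 0 < T := Real.rpow_pos_of_pos hKpos θ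
  set c : ℝ := B / T with hc
  have hcpos : 0 < c := div_pos hB hTpos
  have hαc : ∀ i k, α i k * (δ i k : ℝ) = c := by
    intro i k; rw [hα, hδ]; simp [hc, hT]
  -- weights
  have hweight : ∀ i : Fin n, (∑ k ∈ Finset.range K, α i k * (δ i k : ℝ)) /
      (∑ j, ∑ k ∈ Finset.range K, α j k * (δ j k : ℝ)) = 1 / (n:ℝ) := by
    intro i
    have hpK : ∀ j : Fin n, ∑ k ∈ Finset.range K, α j k * (δ j k:ℝ) = (K:ℝ) * c := by
      intro j
      simp [hαc, Finset.sum_const, Finset.card_range, nsmul_eq_mul]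
    rw [hpK]
    have hden2 : ∑ j : Fin n, ∑ k ∈ Finset.range K, α j k * (δ j k:ℝ)
        = (n:ℝ) * ((K:ℝ) * c) := by
      simp only [hpK]
      rw [Finset.sum_const, card_univ, Fintype.card_fin, nsmul_eq_mul]
    rw [hden2, div_eq_div_iff (mul_pos hn0 (mul_pos hKpos hcpos)).ne' hn0.ne']
    ring
  -- F-minimality of xK
  have hFK : ∀ y, ∑ i, f i xK ≤ ∑ i, f i y := by
    intro y
    have h := hxK y
    simp only [hweight] at h
    rw [← Finset.mul_sum, ← Finset.mul_sum] at h
    have h1n : (0:ℝ) < 1/(n:ℝ) := by positivity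
    exact le_of_mul_le_mul_left h h1n
  -- uniqueness of minimizer
  have hxKeq : xK = xstar := by
    set m := (1/2 : ℝ) • xK + (1/2 : ℝ) • xstar with hm
    have hpar : ‖m‖^2 = 1/2*‖xK‖^2 + 1/2*‖xstar‖^2 - 1/4*‖xK - xstar‖^2 := by
      have h1 : m = (1/2 : ℝ) • (xK + xstar) := by rw [hm, smul_add]
      have h2 : ‖m‖^2 = 1/4 * ‖xK + xstar‖^2 := by
        rw [h1, norm_smul]
        simp [Real.norm_eq_abs]
        ring
      have h3 := parallelogram_law_with_norm ℝ xK xstar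
      have e : ∀ u : EuclideanSpace ℝ (Fin d), ‖u‖*‖u‖ = ‖u‖^2 := fun u => (sq ‖u‖).symm
      linarith
    have hmid : ∀ i : Fin n, f i m ≤ 1/2 * f i xK + 1/2 * f i xstar
        - μ/8 * ‖xK - xstar‖^2 := by
      intro i
      have h := (hsc i).2 (Set.mem_univ xK) (Set.mem_univ xstar)
        (by norm_num : (0:ℝ) ≤ 1/2) (by norm_num : (0:ℝ) ≤ 1/2) (by norm_num)
      simp only [smul_eq_mul] at h
      have hm' : (1/2:ℝ) • xK + (1/2:ℝ) • xstar = m := by rw [hm]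
      rw [hm'] at h
      nlinarith [hpar]
    have hsum : ∑ i, f i m ≤ 1/2 * ∑ i, f i xK + 1/2 * ∑ i, f i xstar
        - (n:ℝ)*(μ/8*‖xK - xstar‖^2) := by
      calc ∑ i, f i m ≤ ∑ i, (1/2 * f i xK + 1/2 * f i xstar - μ/8*‖xK-xstar‖^2) :=
            Finset.sum_le_sum fun i _ => hmid i
        _ = _ := by
            rw [Finset.sum_sub_distrib, Finset.sum_add_distrib, ← Finset.mul_sum,
              ← Finset.mul_sum, Finset.sum_const, card_univ, Fintype.card_fin,
              nsmul_eq_mul]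
    have h1 := hxstar m
    have h2 := hFK xstar
    have h3 := hxstar xK
    have hnm : (0:ℝ) < (n:ℝ)*(μ/8) := by
      apply mul_pos hn0; linarith
    have hns : (n:ℝ)*(μ/8*‖xK - xstar‖^2) ≤ 0 := by linarith
    have hzero : ‖xK - xstar‖^2 ≤ 0 := by nlinarith [hns, hnm]
    have h5 : xK - xstar = 0 := by
      rw [← norm_eq_zero]
      nlinarith [norm_nonneg (xK - xstar)]
    exact sub_eq_zero.mp h5
  -- recursion in difference form
  have hrecd : ∀ k, xbar (k+1) - xstar =
      (xbar k - xstar) - ((n:ℝ))⁻¹ • ∑ i, c • gradient (f i) (z i k) := by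
    intro k
    rw [hrec k]
    simp only [hαc]
    abel
  -- per-step descent inequality
  have hstep : ∀ k, 2*c*μ*‖xbar k - xstar‖^2 ≤
      ‖xbar k - xstar‖^2 - ‖xbar (k+1) - xstar‖^2
        + (2*c*M*L/((n:ℝ)*μ)) * (∑ i, ‖z i k - xbar k‖) + c^2*L^2 := by
    intro k
    set u : EuclideanSpace ℝ (Fin d) := xbar k - xstar with hu
    set G : EuclideanSpace ℝ (Fin d) :=
      ((n:ℝ))⁻¹ • ∑ i, c • gradient (f i) (z i k) with hG
    have hx1 : xbar (k+1) - xstar = u - G := hrecd k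
    have hbu : μ * ‖u‖ ≤ L := hball0 (xbar k) (fun i => hgx i k)
    have hbu' : ‖u‖ ≤ L/μ := by
      rw [le_div_iff₀ hμ]; linarith
    have hnormG : ‖G‖ ≤ c * L := by
      have h1 : ‖∑ i, c • gradient (f i) (z i k)‖ ≤ (n:ℝ) * (c * L) := by
        calc ‖∑ i, c • gradient (f i) (z i k)‖
            ≤ ∑ i, ‖c • gradient (f i) (z i k)‖ := norm_sum_le _ _
          _ ≤ ∑ _i : Fin n, c * L := by
              refine Finset.sum_le_sum fun i _ => ?_
              rw [norm_smul, Real.norm_eq_abs, abs_of_pos hcpos]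
              exact mul_le_mul_of_nonneg_left (hgz i k) hcpos.le
          _ = (n:ℝ) * (c * L) := by
              rw [Finset.sum_const, card_univ, Fintype.card_fin, nsmul_eq_mul]
      have h2 : ‖G‖ = ((n:ℝ))⁻¹ * ‖∑ i, c • gradient (f i) (z i k)‖ := by
        rw [hG, norm_smul, Real.norm_eq_abs, abs_of_pos (inv_pos.mpr hn0)]
      rw [h2]
      calc ((n:ℝ))⁻¹ * ‖∑ i, c • gradient (f i) (z i k)‖
          ≤ ((n:ℝ))⁻¹ * ((n:ℝ) * (c*L)) :=
            mul_le_mul_of_nonneg_left h1 (inv_pos.mpr hn0).le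
        _ = c * L := by field_simp
    have hiG : ⟪u, G⟫ = ((n:ℝ))⁻¹ * ∑ i, c * ⟪u, gradient (f i) (z i k)⟫ := by
      rw [hG, real_inner_smul_right, inner_sum]
      congr 1
      exact Finset.sum_congr rfl fun i _ => real_inner_smul_right _ _ _
    have hi1 : ∀ i : Fin n, ⟪u, gradient (f i) (xbar k)⟫
        - (L/μ) * (M * ‖z i k - xbar k‖) ≤ ⟪u, gradient (f i) (z i k)⟫ := by
      intro i
      have hsplit : ⟪u, gradient (f i) (z i k)⟫ = ⟪u, gradient (f i) (xbar k)⟫ +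
          ⟪u, gradient (f i) (z i k) - gradient (f i) (xbar k)⟫ := by
        rw [← inner_add_right]
        congr 1
        abel
      have habs := abs_real_inner_le_norm u
        (gradient (f i) (z i k) - gradient (f i) (xbar k))
      have hb2 := hlip i (z i k) (xbar k)
      have h3 : ‖u‖ * ‖gradient (f i) (z i k) - gradient (f i) (xbar k)‖
          ≤ (L/μ) * (M * ‖z i k - xbar k‖) := by
        have hMz : M * ‖gradient (f i) (z i k) - gradient (f i) (xbar k)‖
            ≤ M * (M * ‖z i k - xbar k‖) := by nlinarith
        refine mul_le_mul hbu' hb2 (norm_nonneg _) ?_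
        exact div_nonneg hL.le hμ.le
      have h4 := neg_abs_le ⟪u, gradient (f i) (z i k) - gradient (f i) (xbar k)⟫
      rw [hsplit]
      linarith
    have hi2 : (n:ℝ)*μ*‖u‖^2 ≤ ∑ i, ⟪u, gradient (f i) (xbar k)⟫ := by
      have ha1 : ∑ i, ⟪u, gradient (f i) (xbar k)⟫
          = ∑ i, ⟪gradient (f i) (xbar k) - gradient (f i) xstar, u⟫ := by
        rw [← inner_sum, ← sum_inner, Finset.sum_sub_distrib, hgradsum0, sub_zero,
          real_inner_comm]
      rw [ha1]
      calc (n:ℝ)*μ*‖u‖^2 = ∑ _i : Fin n, μ*‖xbar k - xstar‖^2 := by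
            rw [Finset.sum_const, card_univ, Fintype.card_fin, nsmul_eq_mul, hu]; ring
        _ ≤ _ := Finset.sum_le_sum fun i _ => hmono i (xbar k) xstar
    have hsumX : (n:ℝ)*μ*‖u‖^2 - (L/μ)*(M*(∑ i, ‖z i k - xbar k‖))
        ≤ ∑ i, ⟪u, gradient (f i) (z i k)⟫ := by
      have hs := Finset.sum_le_sum fun i (_ : i ∈ Finset.univ) => hi1 i
      rw [Finset.sum_sub_distrib] at hs
      have hre : ∑ i, (L/μ)*(M*‖z i k - xbar k‖)
          = (L/μ)*(M*(∑ i, ‖z i k - xbar k‖)) := by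
        rw [Finset.mul_sum, Finset.mul_sum]
      rw [hre] at hs
      linarith
    have hinner : c*μ*‖u‖^2 - c*M*L/((n:ℝ)*μ) * (∑ i, ‖z i k - xbar k‖) ≤ ⟪u, G⟫ := by
      rw [hiG, ← Finset.mul_sum]
      have h5 : c * ((n:ℝ)*μ*‖u‖^2 - (L/μ)*(M*(∑ i, ‖z i k - xbar k‖)))
          ≤ c * ∑ i, ⟪u, gradient (f i) (z i k)⟫ :=
        mul_le_mul_of_nonneg_left hsumX hcpos.le
      have h6 : ((n:ℝ))⁻¹ * (c * ((n:ℝ)*μ*‖u‖^2 - (L/μ)*(M*(∑ i, ‖z i k - xbar k‖))))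
          = c*μ*‖u‖^2 - c*M*L/((n:ℝ)*μ) * (∑ i, ‖z i k - xbar k‖) := by
        field_simp
      calc c*μ*‖u‖^2 - c*M*L/((n:ℝ)*μ) * (∑ i, ‖z i k - xbar k‖)
          = ((n:ℝ))⁻¹ * (c * ((n:ℝ)*μ*‖u‖^2 - (L/μ)*(M*(∑ i, ‖z i k - xbar k‖)))) :=
            h6.symm
        _ ≤ ((n:ℝ))⁻¹ * (c * ∑ i, ⟪u, gradient (f i) (z i k)⟫) :=
            mul_le_mul_of_nonneg_left h5 (inv_pos.mpr hn0).le
    have hexp : ‖u - G‖^2 = ‖u‖^2 - 2*⟪u,G⟫ + ‖G‖^2 := norm_sub_sq_real u G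
    have hG2 : ‖G‖^2 ≤ c^2*L^2 := by nlinarith [norm_nonneg G, hnormG]
    have hfac : 2*c*M*L/((n:ℝ)*μ) * (∑ i, ‖z i k - xbar k‖)
        = 2*(c*M*L/((n:ℝ)*μ) * (∑ i, ‖z i k - xbar k‖)) := by ring
    rw [hx1, hexp, hfac]
    linarith [hinner, hG2]
  -- consensus sum bound
  have hSk : ∀ k : ℕ, (∑ i, ‖z i k - xbar k‖) ≤ C*q^k*Aa + (n:ℝ)*(C*L*c/(1-q)) := by
    intro k
    have hone : ∀ i : Fin n, ‖z i k - xbar k‖ ≤ C*q^k*(a i) + C*L*c/(1-q) := by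
      intro i
      have h1 := hcons i k
      have h2 : ∑ s ∈ Finset.range (k+1), q^(k-s) * (α i s * (δ i s:ℝ))
          = c * ∑ s ∈ Finset.range (k+1), q^(k-s) := by
        rw [Finset.mul_sum]
        exact Finset.sum_congr rfl fun s _ => by rw [hαc]; ring
      have h3 : ∑ s ∈ Finset.range (k+1), q^(k-s) ≤ 1/(1-q) := by
        have hr := Finset.sum_range_reflect (fun j => q^j) (k+1)
        have hre : ∑ s ∈ Finset.range (k+1), q^(k-s)
            = ∑ j ∈ Finset.range (k+1), q^j := by
          rw [← hr]
          exact Finset.sum_congr rfl fun j hj => rfl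
        rw [hre]
        exact geom_sum_le_one_div' hq0.le hq1 _
      have hCL : (0:ℝ) ≤ C*L := mul_nonneg hC.le hL.le
      calc ‖z i k - xbar k‖
          ≤ C*q^k*(a i) + C*L*(c * ∑ s ∈ Finset.range (k+1), q^(k-s)) := by
            rw [← h2]; exact h1
        _ ≤ C*q^k*(a i) + C*L*(c * (1/(1-q))) := by
            have := mul_le_mul_of_nonneg_left
              (mul_le_mul_of_nonneg_left h3 hcpos.le) hCL
            linarith
        _ = C*q^k*(a i) + C*L*c/(1-q) := by ring
    calc (∑ i, ‖z i k - xbar k‖) ≤ ∑ i, (C*q^k*(a i) + C*L*c/(1-q)) :=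
          Finset.sum_le_sum fun i _ => hone i
      _ = C*q^k*Aa + (n:ℝ)*(C*L*c/(1-q)) := by
          rw [Finset.sum_add_distrib, Finset.sum_const, card_univ, Fintype.card_fin,
            nsmul_eq_mul, ← Finset.mul_sum, hAa]
  -- summed inequality
  have hsumstep : 2*c*μ * (∑ k ∈ Finset.range K, ‖xbar k - xstar‖^2) ≤
      ‖xbar 0 - xstar‖^2 + c*P + (K:ℝ)*c^2*Q := by
    have h1 : ∑ k ∈ Finset.range K, (2*c*μ*‖xbar k - xstar‖^2) ≤
        ∑ k ∈ Finset.range K, (‖xbar k - xstar‖^2 - ‖xbar (k+1) - xstar‖^2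
          + (2*c*M*L/((n:ℝ)*μ)) * (∑ i, ‖z i k - xbar k‖) + c^2*L^2) :=
      Finset.sum_le_sum fun k _ => hstep k
    rw [← Finset.mul_sum] at h1
    have h2 : ∑ k ∈ Finset.range K, (‖xbar k - xstar‖^2 - ‖xbar (k+1) - xstar‖^2
          + (2*c*M*L/((n:ℝ)*μ)) * (∑ i, ‖z i k - xbar k‖) + c^2*L^2)
        = (‖xbar 0 - xstar‖^2 - ‖xbar K - xstar‖^2)
          + (2*c*M*L/((n:ℝ)*μ)) * (∑ k ∈ Finset.range K, ∑ i, ‖z i k - xbar k‖)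
          + (K:ℝ)*(c^2*L^2) := by
      rw [Finset.sum_add_distrib, Finset.sum_add_distrib, Finset.sum_range_sub',
        ← Finset.mul_sum, Finset.sum_const, Finset.card_range, nsmul_eq_mul]
    rw [h2] at h1
    have hSsum : ∑ k ∈ Finset.range K, (∑ i, ‖z i k - xbar k‖) ≤
        C*Aa*(1/(1-q)) + (K:ℝ)*((n:ℝ)*(C*L*c/(1-q))) := by
      calc ∑ k ∈ Finset.range K, (∑ i, ‖z i k - xbar k‖)
          ≤ ∑ k ∈ Finset.range K, (C*q^k*Aa + (n:ℝ)*(C*L*c/(1-q))) :=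
            Finset.sum_le_sum fun k _ => hSk k
        _ = C*Aa*(∑ k ∈ Finset.range K, q^k) + (K:ℝ)*((n:ℝ)*(C*L*c/(1-q))) := by
            rw [Finset.sum_add_distrib, Finset.sum_const, Finset.card_range,
              nsmul_eq_mul]
            congr 1
            rw [Finset.mul_sum]
            exact Finset.sum_congr rfl fun k _ => by ring
        _ ≤ _ := by
            have hg := geom_sum_le_one_div' hq0.le hq1 K
            have hCA : (0:ℝ) ≤ C*Aa := mul_nonneg hC.le hAa0
            have := mul_le_mul_of_nonneg_left hg hCA
            linarith
    have hcoef : (0:ℝ) ≤ 2*c*M*L/((n:ℝ)*μ) :=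
      div_nonneg (mul_pos (mul_pos (mul_pos two_pos hcpos) hM) hL).le
        (mul_pos hn0 hμ).le
    have h3 := mul_le_mul_of_nonneg_left hSsum hcoef
    have hPeq : (2*c*M*L/((n:ℝ)*μ)) * (C*Aa*(1/(1-q))) = c*P := by
      rw [hP]
      field_simp
    have hQeq : (2*c*M*L/((n:ℝ)*μ)) * ((K:ℝ)*((n:ℝ)*(C*L*c/(1-q)))) + (K:ℝ)*(c^2*L^2)
        = (K:ℝ)*c^2*Q := by
      rw [hQ]
      field_simp
    have hnormK : (0:ℝ) ≤ ‖xbar K - xstar‖^2 := sq_nonneg _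
    have h4 : 2*c*μ * (∑ k ∈ Finset.range K, ‖xbar k - xstar‖^2) ≤
        (‖xbar 0 - xstar‖^2 - ‖xbar K - xstar‖^2)
          + (2*c*M*L/((n:ℝ)*μ)) * (C*Aa*(1/(1-q)) + (K:ℝ)*((n:ℝ)*(C*L*c/(1-q))))
          + (K:ℝ)*(c^2*L^2) := h1.trans (by linarith [h3])
    have heq : (‖xbar 0 - xstar‖^2 - ‖xbar K - xstar‖^2)
          + (2*c*M*L/((n:ℝ)*μ)) * (C*Aa*(1/(1-q)) + (K:ℝ)*((n:ℝ)*(C*L*c/(1-q))))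
          + (K:ℝ)*(c^2*L^2)
        = ‖xbar 0 - xstar‖^2 - ‖xbar K - xstar‖^2 + (c*P + (K:ℝ)*c^2*Q) := by
      rw [hP, hQ]
      field_simp
      ring
    rw [heq] at h4
    linarith [h4, hnormK]
  -- conclude
  refine ⟨hweight, hxKeq, ?_⟩
  have hKT : (K:ℝ)^(1-θ) = (K:ℝ)/T := by
    rw [Real.rpow_sub hKpos, Real.rpow_one, hT]
  rw [hKT]
  have hmulpos : (0:ℝ) < 2*c*μ*(K:ℝ) :=
    mul_pos (mul_pos (mul_pos two_pos hcpos) hμ) hKpos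
  refine le_of_mul_le_mul_left ?_ hmulpos
  have hL1 : 2*c*μ*(K:ℝ) * ((1/(K:ℝ)) * ∑ k ∈ Finset.range K, ‖xbar k - xstar‖^2)
      = 2*c*μ * ∑ k ∈ Finset.range K, ‖xbar k - xstar‖^2 := by
    field_simp
  have key2 : 2*c*μ*(K:ℝ) * ((n:ℝ)*(B^2*Q/(2*(n:ℝ)) + B^2*Q/(2*(n:ℝ)))/(2*μ*B*T)
      + (n:ℝ)*(B*(P+P0)/(n:ℝ))/(2*μ*B*(K:ℝ))
      + (n:ℝ)*‖xbar 0 - xstar‖^2/(2*μ*B*((K:ℝ)/T)))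
      = (n:ℝ)*‖xbar 0 - xstar‖^2 + c*(P+P0) + (K:ℝ)*c^2*Q := by
    rw [hc]
    field_simp
    ring
  rw [hL1, key2]
  have hr0n : ‖xbar 0 - xstar‖^2 ≤ (n:ℝ)*‖xbar 0 - xstar‖^2 := by
    nlinarith [sq_nonneg ‖xbar 0 - xstar‖, hn0,
      (by exact_mod_cast hn : (1:ℝ) ≤ (n:ℝ))]
  have hcP0 : 0 ≤ c*P0 := (mul_pos hcpos hP0pos).le
  nlinarith [hsumstep, hr0n, hcP0]
end

section
/- Fix an integer K ≥ 1, θ ∈ (1/2, 1) and B > 0. Define c_i[k] := ∑_{ℓ=0}^k δ_i[ℓ] and suppose δ_i[0] = 1 for every i. Suppose each agent uses the step-size α_i[k] = w_i B / (c_i[k])^θ with the scaling factor w_i := ( ∑_{k=0}^{K−1} (k+1)^{−θ} ) / ( ∑_{k=0}^{c_i[K−1]−1} (k+1)^{−θ} ) (note w_i ≥ 1 since c_i[K−1] ≤ K). Then p_i^{(K)} = B ∑_{k=0}^{K−1} (k+1)^{−θ} for every i ∈ {1,…,n}; consequently p̄_i^{(K)} = 1/n for every i, and the minimizer x*_K of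 the reweighted objective F_K := ∑_{i=1}^n p̄_i^{(K)} f_i equals the minimizer x* of F := ∑_{i=1}^n f_i. -/
open Finset

private lemma key_sum (δ : ℕ → ℕ) (hδ : ∀ k, δ k = 0 ∨ δ k = 1) (g : ℕ → ℝ) :
    ∀ K, ∑ k ∈ Finset.range K, (δ k : ℝ) * g (∑ ℓ ∈ Finset.range (k+1), δ ℓ) =
      ∑ m ∈ Finset.range (∑ ℓ ∈ Finset.range K, δ ℓ), g (m+1) := by
  intro K
  induction K with
  | zero => simp
  | succ K ih =>
    rw [Finset.sum_range_succ, ih, Finset.sum_range_succ (f := δ)]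
    rcases hδ K with h | h
    · simp [h]
    · rw [h, Finset.sum_range_succ]
      simp

private lemma convexOn_univ_sum {E : Type*} [AddCommGroup E] [Module ℝ E]
    {ι : Type*} (t : Finset ι) (g : ι → E → ℝ)
    (h : ∀ i ∈ t, ConvexOn ℝ Set.univ (g i)) :
    ConvexOn ℝ Set.univ (fun x => ∑ i ∈ t, g i x) := by
  induction t using Finset.cons_induction with
  | empty => simpa using convexOn_const 0 convex_univ
  | cons a t ha ih =>
    simp only [Finset.sum_cons]
    exact (h a (Finset.mem_cons_self a t)).add
      (ih fun i hi => h i (Finset.mem_cons_of_mem hi))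

/-- Corollary (diminishing step-size with known update rates): if each agent uses
`α_i[k] = w_i B / (c_i[k])^θ` with
`w_i = (∑_{k<K} (k+1)^{−θ}) / (∑_{k<c_i[K−1]} (k+1)^{−θ})`, then
`p_i^{(K)} = B ∑_{k<K} (k+1)^{−θ}` for every `i`, hence `p̄_i^{(K)} = 1/n`, and the
minimizer of the reweighted objective equals the global minimizer `x*`. -/
theorem stmt_14
    {n d : ℕ} (hn : 1 ≤ n) (hd : 1 ≤ d)
    {μ M : ℝ} (hμ : 0 < μ) (hμM : μ ≤ M)
    (f : Fin n → EuclideanSpace ℝ (Fin d) → ℝ)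
    (hdiff : ∀ i, Differentiable ℝ (f i))
    (hsc : ∀ i, ConvexOn ℝ Set.univ (fun x => f i x - μ / 2 * ‖x‖ ^ 2))
    (hlip : ∀ i x y, ‖gradient (f i) x - gradient (f i) y‖ ≤ M * ‖x - y‖)
    (xstar : EuclideanSpace ℝ (Fin d))
    (hxstar : ∀ y, ∑ i, f i xstar ≤ ∑ i, f i y)
    (K : ℕ) (hK : 1 ≤ K)
    {θ B : ℝ} (hθ : θ ∈ Set.Ioo (1/2 : ℝ) 1) (hB : 0 < B)
    (δ : Fin n → ℕ → ℕ) (hδ : ∀ i k, δ i k = 0 ∨ δ i k = 1) (hδ0 : ∀ i, δ i 0 = 1)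
    (w : Fin n → ℝ)
    (hwdef : ∀ i, w i =
      (∑ k ∈ Finset.range K, ((k : ℝ) + 1) ^ (-θ)) /
        (∑ k ∈ Finset.range (∑ ℓ ∈ Finset.range ((K - 1) + 1), δ i ℓ),
          ((k : ℝ) + 1) ^ (-θ)))
    (α : Fin n → ℕ → ℝ)
    (hα : ∀ i k, α i k =
      w i * B / ((∑ ℓ ∈ Finset.range (k + 1), δ i ℓ : ℕ) : ℝ) ^ θ)
    (xK : EuclideanSpace ℝ (Fin d))
    (hxK : ∀ y, ∑ i, ((∑ k ∈ Finset.range K, α i k * (δ i k : ℝ)) /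
            (∑ j, ∑ k ∈ Finset.range K, α j k * (δ j k : ℝ))) * f i xK ≤
          ∑ i, ((∑ k ∈ Finset.range K, α i k * (δ i k : ℝ)) /
            (∑ j, ∑ k ∈ Finset.range K, α j k * (δ j k : ℝ))) * f i y) :
    (∀ i, ∑ k ∈ Finset.range K, α i k * (δ i k : ℝ) =
      B * ∑ k ∈ Finset.range K, ((k : ℝ) + 1) ^ (-θ)) ∧
    (∀ i, (∑ k ∈ Finset.range K, α i k * (δ i k : ℝ)) /
        (∑ j, ∑ k ∈ Finset.range K, α j k * (δ j k : ℝ)) = 1 / (n : ℝ)) ∧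
    xK = xstar := by
  have hKr : (K - 1) + 1 = K := Nat.succ_pred_eq_of_pos hK
  set S : ℝ := ∑ k ∈ Finset.range K, ((k : ℝ) + 1) ^ (-θ) with hS
  have hθ0 : 0 < θ := lt_trans (by norm_num) hθ.1
  -- positivity of S
  have hSpos : 0 < S := by
    apply Finset.sum_pos
    · intro k _
      positivity
    · exact Finset.nonempty_range_iff.mpr (by omega)
  -- Part 1
  have h1 : ∀ i, ∑ k ∈ Finset.range K, α i k * (δ i k : ℝ) = B * S := by
    intro i
    -- c_i(K-1) ≥ 1
    have hc1 : 1 ≤ ∑ ℓ ∈ Finset.range K, δ i ℓ := by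
      calc 1 = δ i 0 := (hδ0 i).symm
        _ ≤ ∑ ℓ ∈ Finset.range K, δ i ℓ :=
          Finset.single_le_sum (f := δ i) (fun _ _ => Nat.zero_le _)
            (Finset.mem_range.mpr (by omega))
    have hTpos : 0 < ∑ m ∈ Finset.range (∑ ℓ ∈ Finset.range K, δ i ℓ),
        ((m : ℝ) + 1) ^ (-θ) := by
      apply Finset.sum_pos
      · intro k _
        positivity
      · exact Finset.nonempty_range_iff.mpr (by omega)
    have hterm : ∀ k, α i k * (δ i k : ℝ) =
        w i * B * ((δ i k : ℝ) *
          ((((∑ ℓ ∈ Finset.range (k+1), δ i ℓ : ℕ) : ℝ)) ^ (-θ))) := by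
      intro k
      rw [hα i k]
      rcases hδ i k with h | h
      · simp [h]
      · have hcpos : 0 < ∑ ℓ ∈ Finset.range (k+1), δ i ℓ := by
          rcases Nat.eq_zero_or_pos (∑ ℓ ∈ Finset.range (k+1), δ i ℓ) with h0 | h0
          · exfalso
            have := Finset.sum_eq_zero_iff.mp h0 k (Finset.mem_range.mpr (by omega))
            omega
          · exact h0
        have hcR : (0:ℝ) < ((∑ ℓ ∈ Finset.range (k+1), δ i ℓ : ℕ) : ℝ) := by
          exact_mod_cast hcpos
        rw [h, Real.rpow_neg hcR.le]
        field_simp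
    calc ∑ k ∈ Finset.range K, α i k * (δ i k : ℝ)
        = ∑ k ∈ Finset.range K, w i * B * ((δ i k : ℝ) *
            ((((∑ ℓ ∈ Finset.range (k+1), δ i ℓ : ℕ) : ℝ)) ^ (-θ))) := by
          exact Finset.sum_congr rfl fun k _ => hterm k
      _ = w i * B * ∑ k ∈ Finset.range K, (δ i k : ℝ) *
            ((((∑ ℓ ∈ Finset.range (k+1), δ i ℓ : ℕ) : ℝ)) ^ (-θ)) := by
          rw [Finset.mul_sum]
      _ = w i * B * ∑ m ∈ Finset.range (∑ ℓ ∈ Finset.range K, δ i ℓ),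
            (((m : ℕ) + 1 : ℕ) : ℝ) ^ (-θ) := by
          rw [key_sum (δ i) (hδ i) (fun m => ((m : ℕ) : ℝ) ^ (-θ)) K]
      _ = w i * B * ∑ m ∈ Finset.range (∑ ℓ ∈ Finset.range K, δ i ℓ),
            ((m : ℝ) + 1) ^ (-θ) := by
          push_cast
          simp [add_comm]
      _ = B * S := by
          rw [hwdef i, hKr]
          field_simp
  -- denominator
  have hden : (∑ j, ∑ k ∈ Finset.range K, α j k * (δ j k : ℝ)) = n * (B * S) := by
    rw [Finset.sum_congr rfl fun j _ => h1 j]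
    simp [mul_comm]
  have hnpos : (0:ℝ) < n := by exact_mod_cast hn
  have h2 : ∀ i : Fin n, (∑ k ∈ Finset.range K, α i k * (δ i k : ℝ)) /
      (∑ j, ∑ k ∈ Finset.range K, α j k * (δ j k : ℝ)) = 1 / (n : ℝ) := by
    intro i
    rw [h1 i, hden]
    rw [div_eq_div_iff (by positivity) (ne_of_gt hnpos)]
    ring
  refine ⟨h1, h2, ?_⟩
  -- xK minimizes F := ∑ f i
  have hxK' : ∀ y, ∑ i, f i xK ≤ ∑ i, f i y := by
    intro y
    have := hxK y
    simp only [fun i : Fin n => h2 i] at this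
    rw [← Finset.mul_sum, ← Finset.mul_sum] at this
    have hinv : (0:ℝ) < 1 / (n:ℝ) := by positivity
    exact le_of_mul_le_mul_left this hinv
  -- strict convexity of F
  have hFsc : StrongConvexOn Set.univ ((n : ℝ) * μ) (fun x => ∑ i, f i x) := by
    rw [strongConvexOn_iff_convex]
    have : (fun x : EuclideanSpace ℝ (Fin d) =>
        (∑ i, f i x) - (n : ℝ) * μ / 2 * ‖x‖ ^ 2) =
        fun x => ∑ i, (f i x - μ / 2 * ‖x‖ ^ 2) := by
      funext x
      rw [Finset.sum_sub_distrib]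
      simp [Finset.sum_const, Finset.card_univ]
      ring
    rw [this]
    exact convexOn_univ_sum _ _ fun i _ => hsc i
  have hstrict : StrictConvexOn ℝ Set.univ (fun x => ∑ i, f i x) :=
    hFsc.strictConvexOn (by positivity)
  exact hstrict.eq_of_isMinOn
    (fun y _ => hxK' y) (fun y _ => hxstar y) (Set.mem_univ _) (Set.mem_univ _)
end
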